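/- arXiv:2005.02346 — 4 statements merged into one kernel-verified Lean document; each statement's English description precedes it below -/
import Mathlib

section
/- Let p be an odd prime, let G be a GGS-group acting on the p-adic tree, and let g be an element of the commutator subgroup G' (so g fixes all first-level vertices). Writing ψ(g) = (g_1,...,g_p), the product g_1 g_2 ⋯ g_p lies in G'. -/
open List

/-- The automorphism group of the `p`-adic rooted tree: vertices are finite words
over the alphabet `ZMod p` (the letter `i ∈ {1,…,p-1}` is `i` and the letter `p` is `0`),
and automorphisms are the permutations of the vertex set preserving word length and
the prefix relation. -/
def AutT (p : ℕ) : Subgroup (Equiv.Perm (List (ZMod p))) where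
  carrier := {σ | (∀ v, (σ v).length = v.length) ∧
      ∀ u v : List (ZMod p), u <+: v → σ u <+: σ v}
  one_mem' := ⟨fun _ => rfl, fun _ _ h => h⟩
  mul_mem' := by
    rintro σ τ ⟨hσ1, hσ2⟩ ⟨hτ1, hτ2⟩
    refine ⟨fun v => ?_, fun u v h => ?_⟩
    · simp only [Equiv.Perm.mul_apply, hσ1, hτ1]
    · simpa only [Equiv.Perm.mul_apply] using hσ2 _ _ (hτ2 _ _ h)
  inv_mem' := by
    rintro σ ⟨h1, h2⟩
    have hlen : ∀ v, (σ⁻¹ v).length = v.length := by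
      intro v
      have := h1 (σ⁻¹ v)
      rw [show ∀ x, σ (σ⁻¹ x) = x from Equiv.apply_symm_apply σ] at this
      exact this.symm
    refine ⟨hlen, fun u v huv => ?_⟩
    have hle : u.length ≤ (σ⁻¹ v).length := by
      rw [hlen]; exact huv.length_le
    have htake : (σ⁻¹ v).take u.length <+: σ⁻¹ v := List.take_prefix _ _
    have h3 : σ ((σ⁻¹ v).take u.length) <+: v := by
      have := h2 _ _ htake
      rwa [show ∀ x, σ (σ⁻¹ x) = x from Equiv.apply_symm_apply σ] at this
    have hlen2 : (σ ((σ⁻¹ v).take u.length)).length = u.length := by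
      rw [h1, List.length_take]
      omega
    have heq : σ ((σ⁻¹ v).take u.length) = u := by
      refine List.IsPrefix.eq_of_length ?_ (by rw [hlen2])
      exact List.prefix_of_prefix_length_le h3 huv (by rw [hlen2])
    have h4 : σ⁻¹ u = (σ⁻¹ v).take u.length := by
      conv_lhs => rw [← heq]
      exact Equiv.symm_apply_apply _ _
    rw [h4]; exact htake

lemma mem_AutT_iff {p : ℕ} {σ : Equiv.Perm (List (ZMod p))} :
    σ ∈ AutT p ↔ (∀ v, (σ v).length = v.length) ∧
      ∀ u v : List (ZMod p), u <+: v → σ u <+: σ v := Iff.rfl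

lemma autT_apply_append (p : ℕ) (f : Equiv.Perm (List (ZMod p))) (hf : f ∈ AutT p)
    (u v : List (ZMod p)) : f (u ++ v) = f u ++ (f (u ++ v)).drop u.length := by
  rw [mem_AutT_iff] at hf
  have hpre : f u <+: f (u ++ v) := hf.2 u (u ++ v) ⟨v, rfl⟩
  have := List.prefix_iff_eq_append.mp hpre
  rw [hf.1 u] at this
  exact this.symm

/-- The section (state) of a tree automorphism at the vertex `u`, as a permutation of
the subtree rooted at `u` (identified with the whole tree). -/
def secEquiv (p : ℕ) (f : ↥(AutT p)) (u : List (ZMod p)) : Equiv.Perm (List (ZMod p)) where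
  toFun v := ((f : Equiv.Perm (List (ZMod p))) (u ++ v)).drop u.length
  invFun v := (((f⁻¹ : ↥(AutT p)) : Equiv.Perm (List (ZMod p)))
      (((f : Equiv.Perm (List (ZMod p))) u) ++ v)).drop u.length
  left_inv v := by
    dsimp only
    have key := autT_apply_append p (f : Equiv.Perm (List (ZMod p))) f.2 u v
    rw [← key]
    have h1 : ((f⁻¹ : ↥(AutT p)) : Equiv.Perm (List (ZMod p)))
        ((f : Equiv.Perm (List (ZMod p))) (u ++ v)) = u ++ v := by
      rw [InvMemClass.coe_inv]
      exact Equiv.symm_apply_apply _ _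
    rw [h1, List.drop_left]
  right_inv v := by
    dsimp only
    have hg := (f⁻¹ : ↥(AutT p)).2
    rw [mem_AutT_iff] at hg
    have h1 : ((f⁻¹ : ↥(AutT p)) : Equiv.Perm (List (ZMod p)))
        ((f : Equiv.Perm (List (ZMod p))) u) = u := by
      rw [InvMemClass.coe_inv]
      exact Equiv.symm_apply_apply _ _
    have hpre : u <+: ((f⁻¹ : ↥(AutT p)) : Equiv.Perm (List (ZMod p)))
        (((f : Equiv.Perm (List (ZMod p))) u) ++ v) := by
      have := hg.2 ((f : Equiv.Perm (List (ZMod p))) u)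
        (((f : Equiv.Perm (List (ZMod p))) u) ++ v) ⟨v, rfl⟩
      rwa [h1] at this
    have hw := List.prefix_iff_eq_append.mp hpre
    rw [hw]
    have h2 : (f : Equiv.Perm (List (ZMod p)))
        (((f⁻¹ : ↥(AutT p)) : Equiv.Perm (List (ZMod p)))
          (((f : Equiv.Perm (List (ZMod p))) u) ++ v))
        = ((f : Equiv.Perm (List (ZMod p))) u) ++ v := by
      rw [InvMemClass.coe_inv]
      exact Equiv.apply_symm_apply _ _
    rw [h2]
    have hlu : ((f : Equiv.Perm (List (ZMod p))) u).length = u.length :=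
      ((mem_AutT_iff).mp f.2).1 u
    rw [← hlu, List.drop_left]

lemma secEquiv_mem (p : ℕ) (f : ↥(AutT p)) (u : List (ZMod p)) :
    secEquiv p f u ∈ AutT p := by
  rw [mem_AutT_iff]
  obtain ⟨h1, h2⟩ := (mem_AutT_iff).mp f.2
  constructor
  · intro v
    show (((f : Equiv.Perm (List (ZMod p))) (u ++ v)).drop u.length).length = v.length
    rw [List.length_drop, h1, List.length_append]
    omega
  · intro v w hvw
    show ((f : Equiv.Perm (List (ZMod p))) (u ++ v)).drop u.length <+:
      ((f : Equiv.Perm (List (ZMod p))) (u ++ w)).drop u.length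
    have hp : (f : Equiv.Perm (List (ZMod p))) (u ++ v) <+:
        (f : Equiv.Perm (List (ZMod p))) (u ++ w) := by
      apply h2
      obtain ⟨t, rfl⟩ := hvw
      exact ⟨t, by rw [List.append_assoc]⟩
    obtain ⟨t, ht⟩ := hp
    have hle : u.length ≤ ((f : Equiv.Perm (List (ZMod p))) (u ++ v)).length := by
      rw [h1, List.length_append]; omega
    exact ⟨t, by rw [← List.drop_append_of_le_length hle, ht]⟩

/-- `sectionAt p f u = φ_u(f)`, the section of `f` at vertex `u`, as a tree automorphism. -/
def sectionAt (p : ℕ) (f : ↥(AutT p)) (u : List (ZMod p)) : ↥(AutT p) :=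
  ⟨secEquiv p f u, secEquiv_mem p f u⟩

/-- Add `k` to the first letter of a word (identity on the empty word). -/
def addFirst (p : ℕ) (k : ZMod p) : List (ZMod p) → List (ZMod p)
  | [] => []
  | x :: v => (x + k) :: v

lemma addFirst_addFirst (p : ℕ) (k l : ZMod p) (v : List (ZMod p)) :
    addFirst p k (addFirst p l v) = addFirst p (l + k) v := by
  cases v with
  | nil => rfl
  | cons x w => show (x + l + k) :: w = (x + (l + k)) :: w; rw [add_assoc]

lemma addFirst_zero (p : ℕ) (v : List (ZMod p)) : addFirst p 0 v = v := by
  cases v with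
  | nil => rfl
  | cons x w => show (x + 0) :: w = x :: w; rw [add_zero]

lemma addFirst_length (p : ℕ) (k : ZMod p) (v : List (ZMod p)) :
    (addFirst p k v).length = v.length := by
  cases v <;> rfl

/-- The rooted automorphism corresponding to the `p`-cycle `(1 2 ⋯ p)`:
it adds `1` to the first letter of every nonempty word. -/
def aPerm (p : ℕ) : Equiv.Perm (List (ZMod p)) where
  toFun := addFirst p 1
  invFun := addFirst p (-1)
  left_inv v := by rw [addFirst_addFirst, add_neg_cancel, addFirst_zero]
  right_inv v := by rw [addFirst_addFirst, neg_add_cancel, addFirst_zero]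

lemma addFirst_prefix (p : ℕ) (k : ZMod p) (u t : List (ZMod p)) :
    addFirst p k u <+: addFirst p k (u ++ t) := by
  cases u with
  | nil => exact List.nil_prefix
  | cons x w => exact ⟨t, rfl⟩

lemma aPerm_mem (p : ℕ) : aPerm p ∈ AutT p := by
  rw [mem_AutT_iff]
  refine ⟨fun v => addFirst_length p 1 v, ?_⟩
  rintro u v ⟨t, rfl⟩
  exact addFirst_prefix p 1 u t

/-- The rooted generator `a` of a GGS-group. -/
def aA (p : ℕ) : ↥(AutT p) := ⟨aPerm p, aPerm_mem p⟩

/-- The underlying function of the directed automorphism `b` with defining vector `e`. -/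
def bFun (p : ℕ) [NeZero p] (e : Fin (p - 1) → ZMod p) : List (ZMod p) → List (ZMod p)
  | [] => []
  | x :: v =>
    if h : x.val = 0 then x :: bFun p e v
    else x :: addFirst p (e ⟨x.val - 1, by have := ZMod.val_lt x; omega⟩) v

lemma bFun_cons (p : ℕ) [NeZero p] (e : Fin (p - 1) → ZMod p) (x : ZMod p)
    (v : List (ZMod p)) :
    bFun p e (x :: v) = if h : x.val = 0 then x :: bFun p e v
      else x :: addFirst p (e ⟨x.val - 1, by have := ZMod.val_lt x; omega⟩) v := rfl

lemma bFun_bFun (p : ℕ) [NeZero p] (e f : Fin (p - 1) → ZMod p)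
    (h : ∀ j, e j + f j = 0) (v : List (ZMod p)) : bFun p f (bFun p e v) = v := by
  induction v with
  | nil => rfl
  | cons x w ih =>
    by_cases hx : x.val = 0
    · rw [bFun_cons, dif_pos hx, bFun_cons, dif_pos hx, ih]
    · rw [bFun_cons, dif_neg hx, bFun_cons, dif_neg hx, addFirst_addFirst, h, addFirst_zero]

/-- The directed automorphism `b` with defining vector `e`, as a permutation:
`ψ(b) = (a^{e_1}, …, a^{e_{p-1}}, b)`. -/
def bPerm (p : ℕ) [NeZero p] (e : Fin (p - 1) → ZMod p) : Equiv.Perm (List (ZMod p)) where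
  toFun := bFun p e
  invFun := bFun p (fun j => -e j)
  left_inv v := bFun_bFun p e _ (fun j => add_neg_cancel _) v
  right_inv v := bFun_bFun p _ e (fun j => neg_add_cancel _) v

lemma bFun_length (p : ℕ) [NeZero p] (e : Fin (p - 1) → ZMod p) (v : List (ZMod p)) :
    (bFun p e v).length = v.length := by
  induction v with
  | nil => rfl
  | cons x w ih =>
    by_cases hx : x.val = 0
    · rw [bFun_cons, dif_pos hx]; simpa using ih
    · rw [bFun_cons, dif_neg hx]; simp [addFirst_length]

lemma bPerm_mem (p : ℕ) [NeZero p] (e : Fin (p - 1) → ZMod p) : bPerm p e ∈ AutT p := by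
  rw [mem_AutT_iff]
  refine ⟨fun v => bFun_length p e v, ?_⟩
  rintro u v ⟨t, rfl⟩
  show bFun p e u <+: bFun p e (u ++ t)
  induction u with
  | nil => exact List.nil_prefix
  | cons x w ih =>
    by_cases hx : x.val = 0
    · rw [List.cons_append, bFun_cons, dif_pos hx, bFun_cons, dif_pos hx]
      exact List.cons_prefix_cons.mpr ⟨rfl, ih⟩
    · rw [List.cons_append, bFun_cons, dif_neg hx, bFun_cons, dif_neg hx]
      exact List.cons_prefix_cons.mpr ⟨rfl, addFirst_prefix p _ w t⟩

/-- The directed generator `b` of the GGS-group with defining vector `e`. -/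
def bA (p : ℕ) [NeZero p] (e : Fin (p - 1) → ZMod p) : ↥(AutT p) :=
  ⟨bPerm p e, bPerm_mem p e⟩

/-- The GGS-group `G = ⟨a, b⟩ ≤ Aut T` with defining vector `e`. -/
def GGS (p : ℕ) [NeZero p] (e : Fin (p - 1) → ZMod p) : Subgroup ↥(AutT p) :=
  Subgroup.closure {aA p, bA p e}

lemma aA_mem_GGS (p : ℕ) [NeZero p] (e : Fin (p - 1) → ZMod p) : aA p ∈ GGS p e :=
  Subgroup.subset_closure (Set.mem_insert _ _)

lemma bA_mem_GGS (p : ℕ) [NeZero p] (e : Fin (p - 1) → ZMod p) : bA p e ∈ GGS p e :=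
  Subgroup.subset_closure (Set.mem_insert_of_mem _ rfl)

/-- `a^n` for an exponent `n ∈ F_p`. -/
def aZ (p : ℕ) (n : ZMod p) : ↥(AutT p) := aA p ^ n.val

/-- `b^m` for an exponent `m ∈ F_p`. -/
def bZ (p : ℕ) [NeZero p] (e : Fin (p - 1) → ZMod p) (m : ZMod p) : ↥(AutT p) :=
  bA p e ^ m.val

/-- The length `|g|` of an element of the GGS-group with defining vector `e`:
the minimal number `m` of `b`-syllables in an expression
`g = a^{α_1} b^{β_1} a^{α_2} ⋯ b^{β_m} a^{α_{m+1}}`. -/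
noncomputable def glen (p : ℕ) [NeZero p] (e : Fin (p - 1) → ZMod p) (g : ↥(AutT p)) : ℕ :=
  sInf {m : ℕ | ∃ (α : Fin (m + 1) → ZMod p) (β : Fin m → ZMod p),
    g = aZ p (α 0) * (List.ofFn fun i : Fin m => bZ p e (β i) * aZ p (α i.succ)).prod}

/-- An element of `Aut T` fixes all first-level vertices, i.e. lies in `st(1)`. -/
def FixesLevelOne (p : ℕ) (f : ↥(AutT p)) : Prop :=
  ∀ x : ZMod p, (f : Equiv.Perm (List (ZMod p))) [x] = [x]


section GGSAux

variable (p : ℕ) [Fact p.Prime] (e : Fin (p - 1) → ZMod p)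

lemma autT_ext {f g : ↥(AutT p)}
    (h : ∀ v, (f : Equiv.Perm (List (ZMod p))) v = (g : Equiv.Perm (List (ZMod p))) v) :
    f = g := Subtype.ext (Equiv.ext h)

lemma sectionAt_apply (f : ↥(AutT p)) (u v : List (ZMod p)) :
    ((sectionAt p f u : ↥(AutT p)) : Equiv.Perm (List (ZMod p))) v
      = ((f : Equiv.Perm (List (ZMod p))) (u ++ v)).drop u.length := rfl

lemma apply_cons (g : ↥(AutT p)) (x : ZMod p)
    (hgx : (g : Equiv.Perm (List (ZMod p))) [x] = [x]) (v : List (ZMod p)) :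
    (g : Equiv.Perm (List (ZMod p))) (x :: v)
      = x :: ((sectionAt p g [x] : ↥(AutT p)) : Equiv.Perm (List (ZMod p))) v := by
  have h := autT_apply_append p (g : Equiv.Perm (List (ZMod p))) g.2 [x] v
  rw [hgx] at h
  exact h

lemma sectionAt_one (u : List (ZMod p)) : sectionAt p 1 u = 1 := by
  apply autT_ext p
  intro v
  rw [sectionAt_apply]
  simp

lemma sectionAt_mul (f g : ↥(AutT p)) (x : ZMod p)
    (hg : (g : Equiv.Perm (List (ZMod p))) [x] = [x]) :
    sectionAt p (f * g) [x] = sectionAt p f [x] * sectionAt p g [x] := by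
  apply autT_ext p
  intro v
  show ((f : Equiv.Perm (List (ZMod p))) ((g : Equiv.Perm (List (ZMod p))) (x :: v))).drop 1
      = ((f : Equiv.Perm (List (ZMod p)))
          (x :: ((g : Equiv.Perm (List (ZMod p))) (x :: v)).drop 1)).drop 1
  rw [apply_cons p g x hg v]
  simp

lemma sectionAt_inv (g : ↥(AutT p)) (x : ZMod p)
    (hg : (g : Equiv.Perm (List (ZMod p))) [x] = [x]) :
    sectionAt p g⁻¹ [x] = (sectionAt p g [x])⁻¹ := by
  have h := sectionAt_mul p g⁻¹ g x hg
  rw [inv_mul_cancel, sectionAt_one] at h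
  exact eq_inv_of_mul_eq_one_left h.symm

/-- The subgroup of automorphisms fixing level one whose first-level sections all lie
in the GGS-group. -/
def St1G : Subgroup ↥(AutT p) where
  carrier := {g | FixesLevelOne p g ∧ ∀ x : ZMod p, sectionAt p g [x] ∈ GGS p e}
  one_mem' := by
    refine ⟨fun x => ?_, fun x => ?_⟩
    · simp
    · rw [sectionAt_one]; exact one_mem _
  mul_mem' := by
    rintro f g ⟨hf1, hf2⟩ ⟨hg1, hg2⟩
    refine ⟨fun x => ?_, fun x => ?_⟩
    · rw [MulMemClass.coe_mul, Equiv.Perm.mul_apply, hg1 x, hf1 x]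
    · rw [sectionAt_mul p f g x (hg1 x)]
      exact mul_mem (hf2 x) (hg2 x)
  inv_mem' := by
    rintro g ⟨hg1, hg2⟩
    refine ⟨fun x => ?_, fun x => ?_⟩
    · rw [InvMemClass.coe_inv]
      conv_lhs => rw [← hg1 x]
      exact Equiv.symm_apply_apply _ _
    · rw [sectionAt_inv p g x (hg1 x)]
      exact inv_mem (hg2 x)

lemma mem_St1G {g : ↥(AutT p)} :
    g ∈ St1G p e ↔ FixesLevelOne p g ∧ ∀ x : ZMod p, sectionAt p g [x] ∈ GGS p e := Iff.rfl

lemma bA_fixes (x : ZMod p) :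
    ((bA p e : ↥(AutT p)) : Equiv.Perm (List (ZMod p))) [x] = [x] := by
  show bFun p e [x] = [x]
  rw [bFun_cons]
  split_ifs <;> rfl

lemma aA_pow_apply (n : ℕ) (v : List (ZMod p)) :
    ((aA p ^ n : ↥(AutT p)) : Equiv.Perm (List (ZMod p))) v = addFirst p (n : ZMod p) v := by
  induction n with
  | zero => simp [addFirst_zero]
  | succ n ih =>
    rw [pow_succ', MulMemClass.coe_mul, Equiv.Perm.mul_apply, ih]
    show addFirst p 1 (addFirst p (n : ZMod p) v) = _
    rw [addFirst_addFirst]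
    congr 1
    push_cast
    ring

lemma sectionAt_bA_mem (x : ZMod p) : sectionAt p (bA p e) [x] ∈ GGS p e := by
  by_cases h : x.val = 0
  · have heq : sectionAt p (bA p e) [x] = bA p e := by
      apply autT_ext p
      intro v
      show (bFun p e (x :: v)).drop 1 = bFun p e v
      rw [bFun_cons, dif_pos h]
      simp
    rw [heq]; exact bA_mem_GGS p e
  · have hlt : x.val - 1 < p - 1 := by have := ZMod.val_lt x; omega
    have heq : sectionAt p (bA p e) [x] = aA p ^ (e ⟨x.val - 1, hlt⟩).val := by
      apply autT_ext p
      intro v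
      have hcast : (((e ⟨x.val - 1, hlt⟩).val : ℕ) : ZMod p) = e ⟨x.val - 1, hlt⟩ := by
        rw [ZMod.natCast_val, ZMod.cast_id]
      rw [aA_pow_apply, hcast]
      show (bFun p e (x :: v)).drop 1 = addFirst p (e ⟨x.val - 1, hlt⟩) v
      rw [bFun_cons, dif_neg h]
      simp
    rw [heq]; exact pow_mem (aA_mem_GGS p e) _

lemma bA_mem_St1G : bA p e ∈ St1G p e :=
  ⟨fun x => bA_fixes p e x, fun x => sectionAt_bA_mem p e x⟩

lemma aA_apply_cons (x : ZMod p) (v : List (ZMod p)) :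
    ((aA p : ↥(AutT p)) : Equiv.Perm (List (ZMod p))) (x :: v) = (x + 1) :: v := rfl

lemma aA_inv_apply_cons (x : ZMod p) (v : List (ZMod p)) :
    (((aA p)⁻¹ : ↥(AutT p)) : Equiv.Perm (List (ZMod p))) (x :: v) = (x + -1) :: v := by
  rw [InvMemClass.coe_inv]
  rfl

lemma sectionAt_conj_a (g : ↥(AutT p)) (hg : FixesLevelOne p g) (x : ZMod p) :
    sectionAt p ((aA p)⁻¹ * g * aA p) [x] = sectionAt p g [x + 1] := by
  apply autT_ext p
  intro v
  show ((((aA p)⁻¹ : ↥(AutT p)) : Equiv.Perm (List (ZMod p)))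
      ((g : Equiv.Perm (List (ZMod p)))
        (((aA p : ↥(AutT p)) : Equiv.Perm (List (ZMod p))) (x :: v)))).drop 1
    = ((g : Equiv.Perm (List (ZMod p))) ((x + 1) :: v)).drop 1
  rw [aA_apply_cons, apply_cons p g (x + 1) (hg (x + 1)) v, aA_inv_apply_cons]
  simp

lemma sectionAt_conj_a_inv (g : ↥(AutT p)) (hg : FixesLevelOne p g) (x : ZMod p) :
    sectionAt p (aA p * g * (aA p)⁻¹) [x] = sectionAt p g [x + -1] := by
  apply autT_ext p
  intro v
  show (((aA p : ↥(AutT p)) : Equiv.Perm (List (ZMod p)))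
      ((g : Equiv.Perm (List (ZMod p)))
        ((((aA p)⁻¹ : ↥(AutT p)) : Equiv.Perm (List (ZMod p))) (x :: v)))).drop 1
    = ((g : Equiv.Perm (List (ZMod p))) ((x + -1) :: v)).drop 1
  rw [aA_inv_apply_cons, apply_cons p g (x + -1) (hg (x + -1)) v, aA_apply_cons]
  simp

lemma fixes_conj_a (g : ↥(AutT p)) (hg : FixesLevelOne p g) :
    FixesLevelOne p ((aA p)⁻¹ * g * aA p) := by
  intro x
  show (((aA p)⁻¹ : ↥(AutT p)) : Equiv.Perm (List (ZMod p)))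
      ((g : Equiv.Perm (List (ZMod p)))
        (((aA p : ↥(AutT p)) : Equiv.Perm (List (ZMod p))) [x])) = [x]
  rw [aA_apply_cons, hg (x + 1), aA_inv_apply_cons]
  simp

lemma fixes_conj_a_inv (g : ↥(AutT p)) (hg : FixesLevelOne p g) :
    FixesLevelOne p (aA p * g * (aA p)⁻¹) := by
  intro x
  show ((aA p : ↥(AutT p)) : Equiv.Perm (List (ZMod p)))
      ((g : Equiv.Perm (List (ZMod p)))
        ((((aA p)⁻¹ : ↥(AutT p)) : Equiv.Perm (List (ZMod p))) [x])) = [x]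
  rw [aA_inv_apply_cons, hg (x + -1), aA_apply_cons]
  simp

open Classical in
/-- First-level section, as an element of the GGS-group (junk value `1` otherwise). -/
noncomputable def secG (g : ↥(AutT p)) (x : ZMod p) : ↥(GGS p e) :=
  if h : sectionAt p g [x] ∈ GGS p e then ⟨sectionAt p g [x], h⟩ else 1

/-- Product of the first-level sections, in the abelianization of the GGS-group. -/
noncomputable def Phi (g : ↥(AutT p)) : Abelianization ↥(GGS p e) :=
  ∏ x : ZMod p, Abelianization.of (secG p e g x)

lemma secG_coe {g : ↥(AutT p)} {x : ZMod p} (h : sectionAt p g [x] ∈ GGS p e) :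
    ((secG p e g x : ↥(GGS p e)) : ↥(AutT p)) = sectionAt p g [x] := by
  rw [secG, dif_pos h]

lemma secG_congr {g h : ↥(AutT p)} {x y : ZMod p}
    (hxy : sectionAt p g [x] = sectionAt p h [y]) :
    secG p e g x = secG p e h y := by
  unfold secG
  rw [hxy]

lemma Phi_mul {g h : ↥(AutT p)} (hg : g ∈ St1G p e) (hh : h ∈ St1G p e) :
    Phi p e (g * h) = Phi p e g * Phi p e h := by
  unfold Phi
  rw [← Finset.prod_mul_distrib]
  apply Finset.prod_congr rfl
  intro x _
  have hsec : sectionAt p (g * h) [x] = sectionAt p g [x] * sectionAt p h [x] :=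
    sectionAt_mul p g h x (hh.1 x)
  have h1 : secG p e (g * h) x = secG p e g x * secG p e h x := by
    apply Subtype.ext
    rw [MulMemClass.coe_mul,
      secG_coe p e (show sectionAt p (g * h) [x] ∈ GGS p e by
        rw [hsec]; exact mul_mem (hg.2 x) (hh.2 x)),
      secG_coe p e (hg.2 x), secG_coe p e (hh.2 x), hsec]
  rw [h1, map_mul]

lemma Phi_one : Phi p e 1 = 1 := by
  unfold Phi
  have h1 : ∀ x : ZMod p, secG p e (1 : ↥(AutT p)) x = 1 := by
    intro x
    apply Subtype.ext
    rw [secG_coe p e (show sectionAt p (1 : ↥(AutT p)) [x] ∈ GGS p e by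
      rw [sectionAt_one]; exact one_mem _), sectionAt_one]
    rfl
  simp [h1]

lemma Phi_inv {g : ↥(AutT p)} (hg : g ∈ St1G p e) : Phi p e g⁻¹ = (Phi p e g)⁻¹ := by
  have h := Phi_mul p e (inv_mem hg) hg
  rw [inv_mul_cancel, Phi_one] at h
  exact eq_inv_of_mul_eq_one_left h.symm

lemma Phi_conj_a {g : ↥(AutT p)} (hg : g ∈ St1G p e) :
    Phi p e ((aA p)⁻¹ * g * aA p) = Phi p e g := by
  unfold Phi
  exact Fintype.prod_equiv (Equiv.addRight (1 : ZMod p)) _ _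
    (fun x => congrArg _ (secG_congr p e (sectionAt_conj_a p g hg.1 x)))

lemma Phi_conj_a_inv {g : ↥(AutT p)} (hg : g ∈ St1G p e) :
    Phi p e (aA p * g * (aA p)⁻¹) = Phi p e g := by
  unfold Phi
  exact Fintype.prod_equiv (Equiv.addRight (-1 : ZMod p)) _ _
    (fun x => congrArg _ (secG_congr p e (sectionAt_conj_a_inv p g hg.1 x)))

/-- `c` conjugates `St1G` into itself preserving `Phi`. -/
def ConjOK (c : ↥(AutT p)) : Prop :=
  ∀ g ∈ St1G p e, (c⁻¹ * g * c ∈ St1G p e ∧ Phi p e (c⁻¹ * g * c) = Phi p e g)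

lemma conjOK_a : ConjOK p e (aA p) := fun g hg =>
  ⟨⟨fixes_conj_a p g hg.1, fun x => by
      rw [sectionAt_conj_a p g hg.1 x]; exact hg.2 (x + 1)⟩,
   Phi_conj_a p e hg⟩

lemma conjOK_a_inv : ConjOK p e (aA p)⁻¹ := by
  intro g hg
  rw [inv_inv]
  exact ⟨⟨fixes_conj_a_inv p g hg.1, fun x => by
      rw [sectionAt_conj_a_inv p g hg.1 x]; exact hg.2 (x + -1)⟩,
    Phi_conj_a_inv p e hg⟩

lemma conjOK_st1 {c : ↥(AutT p)} (hc : c ∈ St1G p e) : ConjOK p e c := by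
  intro g hg
  have hm : c⁻¹ * g * c ∈ St1G p e := mul_mem (mul_mem (inv_mem hc) hg) hc
  refine ⟨hm, ?_⟩
  rw [Phi_mul p e (mul_mem (inv_mem hc) hg) hc, Phi_mul p e (inv_mem hc) hg, Phi_inv p e hc,
    mul_comm ((Phi p e c)⁻¹) (Phi p e g), mul_assoc, inv_mul_cancel, mul_one]

lemma conjOK_one : ConjOK p e 1 := by
  intro g hg
  rw [inv_one, one_mul, mul_one]
  exact ⟨hg, rfl⟩

lemma conjOK_mul {c d : ↥(AutT p)} (hc : ConjOK p e c) (hd : ConjOK p e d) :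
    ConjOK p e (c * d) := by
  intro g hg
  have h1 := hc g hg
  have h2 := hd _ h1.1
  have key : (c * d)⁻¹ * g * (c * d) = d⁻¹ * (c⁻¹ * g * c) * d := by group
  rw [key]
  exact ⟨h2.1, h2.2.trans h1.2⟩

lemma conjOK_of_mem {c : ↥(AutT p)} (hc : c ∈ GGS p e) : ConjOK p e c := by
  have hsub : GGS p e ≤ Subgroup.closure ({aA p} ∪ (St1G p e : Set ↥(AutT p))) := by
    rw [GGS]
    apply (Subgroup.closure_le _).mpr
    rintro x (rfl | rfl)
    · exact Subgroup.subset_closure (Or.inl rfl)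
    · exact Subgroup.subset_closure (Or.inr (bA_mem_St1G p e))
  have h2 : ∀ c, c ∈ Subgroup.closure ({aA p} ∪ (St1G p e : Set ↥(AutT p))) →
      ConjOK p e c ∧ ConjOK p e c⁻¹ := by
    intro c hc
    induction hc using Subgroup.closure_induction with
    | mem x hx =>
      rcases hx with hx | hx
      · rcases hx with rfl
        exact ⟨conjOK_a p e, conjOK_a_inv p e⟩
      · exact ⟨conjOK_st1 p e hx, conjOK_st1 p e (inv_mem hx)⟩
    | one => exact ⟨conjOK_one p e, by rw [inv_one]; exact conjOK_one p e⟩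
    | mul x y hx hy ihx ihy =>
      exact ⟨conjOK_mul p e ihx.1 ihy.1, by
        rw [mul_inv_rev]; exact conjOK_mul p e ihy.2 ihx.2⟩
    | inv x hx ih => exact ⟨ih.2, by rw [inv_inv]; exact ih.1⟩
  exact (h2 c (hsub hc)).1

lemma exists_decomp {x : ↥(AutT p)} (hx : x ∈ GGS p e) :
    ∃ (k : ℤ) (s : ↥(AutT p)), s ∈ St1G p e ∧ x = aA p ^ k * s := by
  have haM : ∀ l : ℤ, ConjOK p e (aA p ^ l) := fun l =>
    conjOK_of_mem p e (zpow_mem (aA_mem_GGS p e) l)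
  let J : Subgroup ↥(AutT p) :=
    { carrier := {x | ∃ (k : ℤ) (s : ↥(AutT p)), s ∈ St1G p e ∧ x = aA p ^ k * s}
      one_mem' := ⟨0, 1, one_mem _, by simp⟩
      mul_mem' := by
        rintro x y ⟨k, s, hs, rfl⟩ ⟨l, t, ht, rfl⟩
        refine ⟨k + l, ((aA p ^ l)⁻¹ * s * aA p ^ l) * t,
          mul_mem ((haM l) s hs).1 ht, ?_⟩
        group
      inv_mem' := by
        rintro x ⟨k, s, hs, rfl⟩
        refine ⟨-k, (aA p ^ (-k))⁻¹ * s⁻¹ * aA p ^ (-k),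
          ((haM (-k)) s⁻¹ (inv_mem hs)).1, ?_⟩
        group }
  have hle : GGS p e ≤ J := by
    rw [GGS]
    apply (Subgroup.closure_le _).mpr
    rintro y (rfl | rfl)
    · exact ⟨1, 1, one_mem _, by simp⟩
    · exact ⟨0, bA p e, bA_mem_St1G p e, by simp⟩
  exact hle hx

open scoped commutatorElement in
lemma commutator_mem_aux {x y : ↥(AutT p)} (hx : x ∈ GGS p e) (hy : y ∈ GGS p e) :
    ⁅x, y⁆ ∈ St1G p e ∧ Phi p e ⁅x, y⁆ = 1 := by
  obtain ⟨k, s, hs, hxeq⟩ := exists_decomp p e (inv_mem hx)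
  obtain ⟨l, t, ht, hyeq⟩ := exists_decomp p e (inv_mem hy)
  have hx2 : x = (aA p ^ k * s)⁻¹ := by rw [← hxeq, inv_inv]
  have hy2 : y = (aA p ^ l * t)⁻¹ := by rw [← hyeq, inv_inv]
  have hck := conjOK_of_mem p e (zpow_mem (aA_mem_GGS p e) k)
  have hcl := conjOK_of_mem p e (zpow_mem (aA_mem_GGS p e) l)
  have h2 := hck t ht
  have h3 := hcl s hs
  have key : ⁅x, y⁆
      = s⁻¹ * ((aA p ^ k)⁻¹ * t * aA p ^ k)⁻¹ * ((aA p ^ l)⁻¹ * s * aA p ^ l) * t := by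
    rw [hx2, hy2, commutatorElement_def]
    group
  have m1 : s⁻¹ ∈ St1G p e := inv_mem hs
  have m2 : ((aA p ^ k)⁻¹ * t * aA p ^ k)⁻¹ ∈ St1G p e := inv_mem h2.1
  have m12 := mul_mem m1 m2
  have m123 := mul_mem m12 h3.1
  rw [key]
  refine ⟨mul_mem m123 ht, ?_⟩
  rw [Phi_mul p e m123 ht, Phi_mul p e m12 h3.1, Phi_mul p e m1 m2,
    Phi_inv p e hs, Phi_inv p e h2.1, h2.2, h3.2]
  rw [mul_assoc ((Phi p e s)⁻¹) ((Phi p e t)⁻¹) (Phi p e s),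
    mul_comm ((Phi p e t)⁻¹) (Phi p e s), ← mul_assoc, mul_assoc ((Phi p e s)⁻¹) (Phi p e s)]
  simp

/-- The subgroup of `St1G` on which `Phi` vanishes. -/
def Kgrp : Subgroup ↥(AutT p) where
  carrier := {g | g ∈ St1G p e ∧ Phi p e g = 1}
  one_mem' := ⟨one_mem _, Phi_one p e⟩
  mul_mem' := by
    rintro g h ⟨hg, hg2⟩ ⟨hh, hh2⟩
    exact ⟨mul_mem hg hh, by rw [Phi_mul p e hg hh, hg2, hh2, mul_one]⟩
  inv_mem' := by
    rintro g ⟨hg, hg2⟩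
    exact ⟨inv_mem hg, by rw [Phi_inv p e hg, hg2, inv_one]⟩

lemma commutator_le_Kgrp : ⁅GGS p e, GGS p e⁆ ≤ Kgrp p e :=
  Subgroup.commutator_le.mpr (fun x hx y hy => commutator_mem_aux p e hx hy)

end GGSAux

/-- **Lemma 3.1.** For `G` a GGS-group, let `g ∈ G'` and write `ψ(g) = (g_1, …, g_p)`.
Then `g_1 g_2 ⋯ g_p ∈ G'`. (The section at the first-level vertex `i ∈ {1,…,p}` is
`sectionAt p g [(i : ZMod p)]`, the letter `p` being `0` in `ZMod p`.) -/
theorem ggs_sections_prod_mem_commutator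
    (p : ℕ) [Fact p.Prime] (hodd : Odd p)
    (e : Fin (p - 1) → ZMod p) (he : e ≠ 0)
    (g : ↥(AutT p)) (hg : g ∈ ⁅GGS p e, GGS p e⁆) :
    (List.ofFn fun i : Fin p =>
        sectionAt p g [((i : ℕ) + 1 : ZMod p)]).prod ∈ ⁅GGS p e, GGS p e⁆ := by
  have hgK : g ∈ Kgrp p e := commutator_le_Kgrp p e hg
  obtain ⟨hgSt, hgPhi⟩ := hgK
  set L : List ↥(GGS p e) :=
    List.ofFn (fun i : Fin p => secG p e g ((i : ℕ) + 1 : ZMod p)) with hL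
  have h1 : ((GGS p e).subtype) L.prod
      = (List.ofFn fun i : Fin p => sectionAt p g [((i : ℕ) + 1 : ZMod p)]).prod := by
    rw [map_list_prod, hL, List.map_ofFn]
    refine congrArg List.prod (congrArg List.ofFn (funext fun i => ?_))
    show ((secG p e g ((i : ℕ) + 1 : ZMod p) : ↥(GGS p e)) : ↥(AutT p)) = _
    exact secG_coe p e (hgSt.2 _)
  have hbij : Function.Bijective (fun i : Fin p => (((i : ℕ) : ZMod p) + 1)) := by
    rw [Fintype.bijective_iff_injective_and_card]
    constructor
    · intro i j hij
      simp only at hij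
      have h := add_right_cancel hij
      have hi : ((i : ℕ) : ZMod p).val = (i : ℕ) := ZMod.val_cast_of_lt i.isLt
      have hj : ((j : ℕ) : ZMod p).val = (j : ℕ) := ZMod.val_cast_of_lt j.isLt
      exact Fin.ext (by rw [← hi, ← hj, h])
    · simp [ZMod.card]
  have h2 : Abelianization.of L.prod = 1 := by
    rw [map_list_prod, hL, List.map_ofFn, List.prod_ofFn, ← hgPhi]
    unfold Phi
    exact Fintype.prod_bijective _ hbij _ _ (fun i => rfl)
  have h3 : L.prod ∈ commutator ↥(GGS p e) := by
    have := (QuotientGroup.eq_one_iff (L.prod)).mp h2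
    exact this
  have h4 : ((GGS p e).subtype) L.prod ∈ ⁅GGS p e, GGS p e⁆ := by
    have hmap := Subgroup.mem_map_of_mem (GGS p e).subtype h3
    rw [commutator_def, Subgroup.map_commutator] at hmap
    have htop : Subgroup.map (GGS p e).subtype ⊤ = GGS p e := by
      rw [← MonoidHom.range_eq_map, Subgroup.range_subtype]
    rwa [htop] at hmap
  rwa [h1] at h4
end

section
/- If a group G has a nilpotent subgroup of finite index, then every maximal subgroup of G has finite index in G. -/
open Subgroup

/-- In a nilpotent group, if the commutator subgroup is everything, the group is trivial. -/
lemma aux_subsingleton_of_commutator_eq_top {A : Type*} [Group A] [hA : Group.IsNilpotent A]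
    (h : ⁅(⊤ : Subgroup A), (⊤ : Subgroup A)⁆ = ⊤) : Subsingleton A := by
  have key : ∀ n, (⊤ : Subgroup A).lowerCentralSeries n = ⊤ := by
    intro n
    induction n with
    | zero => exact Subgroup.lowerCentralSeries_zero _
    | succ n ih =>
      show ⁅(⊤ : Subgroup A).lowerCentralSeries n, (⊤ : Subgroup A)⁆ = ⊤
      rw [ih, h]
  obtain ⟨n, hn⟩ := Subgroup.nilpotent_iff_lowerCentralSeries.mp hA
  rw [key n] at hn
  constructor
  intro a b
  have ha : a ∈ (⊤ : Subgroup A) := mem_top a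
  have hb : b ∈ (⊤ : Subgroup A) := mem_top b
  rw [hn, Subgroup.mem_bot] at ha hb
  rw [ha, hb]

/-- A finite nonempty subset of the elements of `sSup c` for a chain `c` of subgroups is
contained in a single member of the chain. -/
lemma aux_chain_finset_bound {A : Type*} [Group A] {c : Set (Subgroup A)}
    (hc : IsChain (· ≤ ·) c) (hne : c.Nonempty) (t : Finset A)
    (ht : ∀ s ∈ t, s ∈ sSup c) : ∃ H ∈ c, ∀ s ∈ t, s ∈ H := by
  classical
  induction t using Finset.induction_on with
  | empty => exact ⟨hne.choose, hne.choose_spec, by simp⟩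
  | @insert a t hat ih =>
    obtain ⟨H, hHc, hH⟩ := ih fun s hs => ht s (Finset.mem_insert_of_mem hs)
    obtain ⟨Ha, hHac, hHa⟩ := (Subgroup.mem_sSup_of_directedOn hne hc.directedOn).mp
      (ht a (Finset.mem_insert_self a t))
    rcases hc.total hHc hHac with hle | hle
    · refine ⟨Ha, hHac, fun s hs => ?_⟩
      rcases Finset.mem_insert.mp hs with rfl | hs
      · exact hHa
      · exact hle (hH s hs)
    · refine ⟨H, hHc, fun s hs => ?_⟩
      rcases Finset.mem_insert.mp hs with rfl | hs
      · exact hle hHa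
      · exact hH s hs

/-- A nontrivial finitely generated group has a maximal (proper) subgroup. -/
lemma aux_exists_coatom_of_fg {A : Type*} [Group A] [Nontrivial A] (hfg : Group.FG A) :
    ∃ L : Subgroup A, IsCoatom L := by
  have hco : IsCoatomic (Subgroup A) := by
    apply IsCoatomic.of_isChain_bounded
    intro c hc hne htop
    refine ⟨sSup c, ?_, fun H hH => le_sSup hH⟩
    intro hsup
    obtain ⟨S, hScl, hSfin⟩ := Group.fg_iff.mp hfg
    obtain ⟨H, hHc, hH⟩ := aux_chain_finset_bound hc hne hSfin.toFinset
      (fun s _ => by rw [hsup]; exact mem_top s)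
    have : Subgroup.closure S ≤ H := (Subgroup.closure_le H).mpr
      (fun s hs => hH s (hSfin.mem_toFinset.mpr hs))
    rw [hScl] at this
    have : H = ⊤ := top_le_iff.mp this
    exact htop (this ▸ hHc)
  rcases hco.eq_top_or_exists_le_coatom (⊥ : Subgroup A) with h | ⟨L, hL, _⟩
  · exfalso
    obtain ⟨x, hx⟩ := exists_ne (1 : A)
    exact hx ((Subgroup.mem_bot).mp (h ▸ mem_top x))
  · exact ⟨L, hL⟩

/-- The quotient of a commutative group by a maximal subgroup is simple. -/
lemma aux_isSimpleGroup_quotient {A : Type*} [CommGroup A] (L : Subgroup A)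
    (hL : IsCoatom L) : IsSimpleGroup (A ⧸ L) := by
  have hnt : Nontrivial (A ⧸ L) := by
    obtain ⟨x, hx⟩ : ∃ x, x ∉ L := by
      by_contra hx
      push_neg at hx
      exact hL.1 (Subgroup.eq_top_iff' L |>.mpr hx)
    exact ⟨⟨(x : A ⧸ L), 1, fun h => hx ((QuotientGroup.eq_one_iff x).mp h)⟩⟩
  refine ⟨fun N _ => ?_⟩
  set π := QuotientGroup.mk' L
  have hπ : Function.Surjective π := QuotientGroup.mk'_surjective L
  have hLN : L ≤ N.comap π := by
    intro x hx
    have : π x = 1 := by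
      show ((x : A ⧸ L)) = 1
      exact (QuotientGroup.eq_one_iff x).mpr hx
    simp only [Subgroup.mem_comap, this]
    exact N.one_mem
  rcases eq_or_lt_of_le hLN with h | h
  · left
    have hmap : N = (N.comap π).map π := (Subgroup.map_comap_eq_self_of_surjective hπ N).symm
    rw [hmap, ← h, eq_bot_iff]
    rintro y ⟨x, hx, rfl⟩
    have hx1 : π x = 1 := by
      show ((x : A ⧸ L)) = 1
      exact (QuotientGroup.eq_one_iff x).mpr hx
    simp [hx1]
  · right
    have : N.comap π = ⊤ := hL.2 _ h
    rw [← Subgroup.map_comap_eq_self_of_surjective hπ N, this]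
    exact Subgroup.map_top_of_surjective π hπ

/-- A commutative simple group is finite. -/
lemma aux_finite_of_isSimpleGroup {Q : Type*} [CommGroup Q] [IsSimpleGroup Q] : Finite Q := by
  obtain ⟨g, hg⟩ := IsCyclic.exists_generator (α := Q)
  have hfin : IsOfFinOrder g := by
    rcases IsSimpleGroup.eq_bot_or_eq_top_of_normal (Subgroup.zpowers (g ^ 2)) inferInstance
      with h | h
    · have : g ^ 2 = 1 := by
        have := Subgroup.mem_zpowers (g ^ 2)
        rw [h, Subgroup.mem_bot] at this
        exact this
      exact isOfFinOrder_iff_pow_eq_one.mpr ⟨2, by norm_num, this⟩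
    · obtain ⟨k, hk⟩ : g ∈ Subgroup.zpowers (g ^ 2) := h ▸ mem_top g
      have hzp : g ^ (2 * k - 1 : ℤ) = 1 := by
        have h2 : (g ^ 2) ^ k = g := hk
        have : g ^ (2 * k : ℤ) = g := by
          rw [zpow_mul, show ((2:ℤ)) = ((2:ℕ):ℤ) from rfl, zpow_natCast]
          exact h2
        rw [sub_eq_add_neg, zpow_add, this, zpow_neg, zpow_one, mul_inv_cancel]
      have hne : (2 * k - 1 : ℤ) ≠ 0 := by omega
      have hnat : g ^ (2 * k - 1 : ℤ).natAbs = 1 := by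
        rcases Int.natAbs_eq (2 * k - 1) with h' | h'
        · rw [← zpow_natCast, ← h', hzp]
        · rw [← zpow_natCast, ← neg_neg ((2 * k - 1 : ℤ).natAbs : ℤ), ← h', zpow_neg, hzp,
            inv_one]
      exact isOfFinOrder_iff_pow_eq_one.mpr
        ⟨(2 * k - 1 : ℤ).natAbs, Nat.pos_of_ne_zero (Int.natAbs_ne_zero.mpr hne), hnat⟩
  have huniv : (Set.univ : Set Q) ⊆ (Subgroup.zpowers g : Set Q) := fun x _ => hg x
  exact Set.finite_univ_iff.mp (hfin.finite_zpowers.subset huniv)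

/-- A finitely generated commutative group of finite exponent `p ≠ 0` is finite. -/
lemma aux_finite_of_fg_of_exponent {A : Type*} [CommGroup A] (hfg : Group.FG A)
    {p : ℕ} (hp : p ≠ 0) (hpow : ∀ x : A, x ^ p = 1) : Finite A := by
  classical
  haveI : NeZero p := ⟨hp⟩
  letI m : Module (ZMod p) (Additive A) := AddCommGroup.zmodModule (by
    intro x
    show p • x = 0
    have : (p • x).toMul = 1 := by rw [toMul_nsmul]; exact hpow _
    exact this)
  obtain ⟨S, hScl, hSfin⟩ := Group.fg_iff.mp hfg
  haveI hmf : Module.Finite (ZMod p) (Additive A) := by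
    constructor
    refine ⟨hSfin.toFinset.image (Additive.ofMul), ?_⟩
    rw [eq_top_iff]
    rintro x -
    have hx : x.toMul ∈ Subgroup.closure S := by rw [hScl]; exact Subgroup.mem_top _
    set T : Set (Additive A) := ↑(hSfin.toFinset.image (Additive.ofMul)) with hT
    have : ∀ a : A, a ∈ Subgroup.closure S → Additive.ofMul a ∈ Submodule.span (ZMod p) T := by
      intro a ha
      induction ha using Subgroup.closure_induction with
      | mem y hy =>
        apply Submodule.subset_span
        simp only [hT, Finset.coe_image, Set.mem_image]
        exact ⟨y, by simpa using hy, rfl⟩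
      | one => exact Submodule.zero_mem _
      | mul y z _ _ ihy ihz => exact Submodule.add_mem _ ihy ihz
      | inv y _ ihy => exact Submodule.neg_mem _ ihy
    exact this x.toMul hx
  have : Finite (Additive A) := @Module.finite_of_finite (ZMod p) (Additive A) _ _ m _ hmf
  exact Finite.of_equiv (Additive A) Additive.toMul

open Subgroup

/-- If a group `G` has a nilpotent subgroup of finite index (i.e. `G` is virtually
nilpotent), then every maximal subgroup of `G` has finite index in `G`. -/
theorem virtually_nilpotent_maximal_subgroup_finiteIndex
    (G : Type*) [Group G] (H : Subgroup G) (hH : H.FiniteIndex)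
    (hnil : Group.IsNilpotent ↥H)
    (M : Subgroup G) (hM : IsCoatom M) :
    M.FiniteIndex := by
  classical
  haveI := hH
  haveI := hnil
  set K := H.normalCore with hKdef
  haveI hKnormal : K.Normal := Subgroup.normalCore_normal H
  haveI hKfi : K.FiniteIndex := Subgroup.finiteIndex_normalCore H
  have hKle : K ≤ H := H.normalCore_le
  haveI hKnil : Group.IsNilpotent ↥K :=
    nilpotent_of_mulEquiv (Subgroup.subgroupOfEquivOfLe hKle)
  by_cases hKM : K ≤ M
  · refine ⟨fun h0 => ?_⟩
    have hdvd := Subgroup.index_dvd_of_le hKM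
    rw [h0] at hdvd
    exact hKfi.index_ne_zero (Nat.eq_zero_of_zero_dvd hdvd)
  · -- K is not contained in M, so M ⊔ K = ⊤
    have hMK : M ⊔ K = ⊤ := by
      refine hM.2 _ (lt_of_le_of_ne le_sup_left fun h => hKM ?_)
      rw [h]; exact le_sup_right
    set K₀ := K ⊓ M with hK₀def
    have hK₀K : K₀ ≤ K := inf_le_left
    have hK₀M : K₀ ≤ M := inf_le_right
    -- M normalizes K₀
    have hMnorm : M ≤ normalizer (K₀ : Set G) := by
      intro m hm
      rw [Subgroup.mem_normalizer_iff]
      intro x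
      constructor
      · rintro ⟨hxK, hxM⟩
        exact ⟨hKnormal.conj_mem x hxK m, M.mul_mem (M.mul_mem hm hxM) (M.inv_mem hm)⟩
      · rintro ⟨hxK, hxM⟩
        have h1 : x = m⁻¹ * (m * x * m⁻¹) * m⁻¹⁻¹ := by group
        rw [h1]
        exact ⟨hKnormal.conj_mem _ hxK m⁻¹,
          M.mul_mem (M.mul_mem (M.inv_mem hm) hxM) (M.inv_mem (M.inv_mem hm))⟩
    -- K₀ is normal in G, using the normalizer condition in the nilpotent group K
    haveI hK₀normal : K₀.Normal := by
      rw [← Subgroup.normalizer_eq_top_iff]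
      by_contra hne
      obtain ⟨k0, hk0K, hk0M⟩ := SetLike.not_le_iff_exists.mp hKM
      have hcond := normalizerCondition_of_isNilpotent (G := ↥K)
      have hSlt : K₀.subgroupOf K < ⊤ := by
        rcases lt_or_eq_of_le (le_top : K₀.subgroupOf K ≤ ⊤) with h | h
        · exact h
        · exfalso
          have : (⟨k0, hk0K⟩ : ↥K) ∈ K₀.subgroupOf K := h ▸ mem_top _
          rw [Subgroup.mem_subgroupOf] at this
          exact hk0M this.2
      obtain ⟨k, hkNorm, hkS⟩ := SetLike.exists_of_lt (hcond _ hSlt)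
      have hkG : (k : G) ∈ normalizer (K₀ : Set G) := by
        rw [Subgroup.mem_normalizer_iff]
        intro x
        constructor
        · intro hx
          have hxK : x ∈ K := hK₀K hx
          have h2 := (Subgroup.mem_normalizer_iff.mp hkNorm ⟨x, hxK⟩).mp
            (by rw [Subgroup.mem_subgroupOf]; exact hx)
          rw [Subgroup.mem_subgroupOf] at h2
          exact h2
        · intro hx
          have hxK : x ∈ K := by
            have h2 : (k : G) * x * (k : G)⁻¹ ∈ K := hK₀K hx
            have h3 : x = (k : G)⁻¹ * ((k : G) * x * (k : G)⁻¹) * (k : G) := by group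
            rw [h3]
            exact K.mul_mem (K.mul_mem (K.inv_mem k.2) h2) k.2
          have h2 := (Subgroup.mem_normalizer_iff.mp hkNorm ⟨x, hxK⟩).mpr
            (by rw [Subgroup.mem_subgroupOf]; exact hx)
          rw [Subgroup.mem_subgroupOf] at h2
          exact h2
      have hMeq : M = normalizer (K₀ : Set G) := by
        rcases eq_or_lt_of_le hMnorm with h | h
        · exact h
        · exact absurd (hM.2 _ h) hne
      have hkM : (k : G) ∈ M := by rw [hMeq]; exact hkG
      exact hkS (by rw [Subgroup.mem_subgroupOf]; exact ⟨k.2, hkM⟩)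
    -- pass to the quotient by K₀
    set π := QuotientGroup.mk' K₀ with hπdef
    have hπsurj : Function.Surjective π := QuotientGroup.mk'_surjective K₀
    have hker : π.ker = K₀ := QuotientGroup.ker_mk' K₀
    set Kb := K.map π with hKbdef
    set Mb := M.map π with hMbdef
    haveI hKbnormal : Kb.Normal := hKnormal.map π hπsurj
    -- key property: any nontrivial normal subgroup of the quotient inside Kb is all of Kb
    have hstar : ∀ N : Subgroup (G ⧸ K₀), N.Normal → N ≤ Kb → N ≠ ⊥ → N = Kb := by
      intro N hNnormal hNK hNbot
      have hcom : K₀ ≤ N.comap π := by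
        intro x hx
        have h1 : π x = 1 := by
          show ((x : G ⧸ K₀)) = 1
          exact (QuotientGroup.eq_one_iff x).mpr hx
        rw [Subgroup.mem_comap, h1]
        exact N.one_mem
      have hNK' : N.comap π ≤ K := by
        have h1 := Subgroup.comap_mono (f := π) hNK
        rwa [Subgroup.comap_map_eq, hker, sup_of_le_left hK₀K] at h1
      haveI : (N.comap π).Normal := hNnormal.comap π
      have hnotle : ¬N.comap π ≤ M := by
        intro hle
        apply hNbot
        have hsub : N.comap π ≤ K₀ := le_inf hNK' hle
        have h2 : N = (N.comap π).map π := (Subgroup.map_comap_eq_self_of_surjective hπsurj N).symm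
        rw [h2, eq_bot_iff]
        rintro y ⟨x, hx, rfl⟩
        have : x ∈ π.ker := by rw [hker]; exact hsub hx
        rw [MonoidHom.mem_ker] at this
        rw [this]
        exact Subgroup.one_mem ⊥
      have hMN : M ⊔ N.comap π = ⊤ := by
        refine hM.2 _ (lt_of_le_of_ne le_sup_left fun h => hnotle ?_)
        rw [h]; exact le_sup_right
      have hKsub : K ≤ N.comap π := by
        intro x hxK
        have hxtop : x ∈ M ⊔ N.comap π := by rw [hMN]; exact mem_top x
        rw [← SetLike.mem_coe, Subgroup.mul_normal] at hxtop
        obtain ⟨m, hm, n, hn, rfl⟩ := hxtop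
        have hnK : n ∈ K := hNK' hn
        have hmK : m ∈ K := by
          have h4 : m = m * n * n⁻¹ := by group
          rw [h4]
          exact K.mul_mem hxK (K.inv_mem hnK)
        have hmN : m ∈ N.comap π := hcom ⟨hmK, hm⟩
        exact (N.comap π).mul_mem hmN hn
      refine le_antisymm hNK ?_
      calc Kb = K.map π := rfl
        _ ≤ (N.comap π).map π := Subgroup.map_mono hKsub
        _ = N := Subgroup.map_comap_eq_self_of_surjective hπsurj N
    -- Kb is abelian
    have hcomm : ∀ a ∈ Kb, ∀ b ∈ Kb, a * b = b * a := by
      have hC : ⁅Kb, Kb⁆ = ⊥ := by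
        by_contra hCbot
        have hCle : ⁅Kb, Kb⁆ ≤ Kb := Subgroup.commutator_le_left Kb Kb
        have hCeq : ⁅Kb, Kb⁆ = Kb := hstar _ inferInstance hCle hCbot
        haveI : Group.IsNilpotent ↥Kb :=
          nilpotent_of_surjective (π.subgroupMap K) (π.subgroupMap_surjective K)
        have htop : ⁅(⊤ : Subgroup ↥Kb), (⊤ : Subgroup ↥Kb)⁆ = ⊤ := by
          apply Subgroup.map_injective Kb.subtype_injective
          rw [Subgroup.map_commutator, ← MonoidHom.range_eq_map, Kb.subtype_range, hCeq]
        haveI := aux_subsingleton_of_commutator_eq_top htop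
        have hKbbot : Kb = ⊥ := Subgroup.eq_bot_of_subsingleton Kb
        rw [hCeq, hKbbot] at hCbot
        exact hCbot rfl
      intro a ha b hb
      open commutatorElement in have h1 : ⁅a, b⁆ ∈ ⁅Kb, Kb⁆ := Subgroup.commutator_mem_commutator ha hb
      rw [hC, Subgroup.mem_bot] at h1
      exact commutatorElement_eq_one_iff_mul_comm.mp h1
    -- index computations
    have hKb_index : Kb.index = K.index :=
      Subgroup.index_map_eq (H := K) (f := π) hπsurj (hker.le.trans hK₀K)
    have hMb_index : Mb.index = M.index :=
      Subgroup.index_map_eq (H := M) (f := π) hπsurj (hker.le.trans hK₀M)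
    haveI hKbfi : Kb.FiniteIndex := ⟨by rw [hKb_index]; exact hKfi.index_ne_zero⟩
    -- main goal: Kb is finite
    have hKbfinite : Finite ↥Kb := by
      by_cases hKbbot : Kb = ⊥
      · rw [hKbbot]
        infer_instance
      · -- pick a nontrivial element a of Kb
        obtain ⟨a, haK, hane⟩ : ∃ a ∈ Kb, a ≠ 1 := by
          by_contra hcon
          push_neg at hcon
          exact hKbbot ((Subgroup.eq_bot_iff_forall Kb).mpr hcon)
        -- Mb is finite
        have hMbKb : Mb ⊓ Kb = ⊥ := by
          rw [eq_bot_iff]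
          rintro x ⟨hxM, hxK⟩
          obtain ⟨m, hm, rfl⟩ := hxM
          obtain ⟨k', hk', hk'e⟩ := hxK
          have : m * k'⁻¹ ∈ π.ker := by
            rw [MonoidHom.mem_ker, map_mul, map_inv, hk'e, mul_inv_cancel]
          rw [hker] at this
          have hmK : m ∈ K := by
            have h4 : m = m * k'⁻¹ * k' := by group
            rw [h4]
            exact K.mul_mem (hK₀K this) hk'
          have hmK₀ : m ∈ K₀ := ⟨hmK, hm⟩
          have : π m = 1 := by
            rw [← hker] at hmK₀
            rwa [MonoidHom.mem_ker] at hmK₀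
          rw [this]
          exact Subgroup.one_mem ⊥
        haveI hMbfin : Finite ↥Mb := by
          haveI : Finite ((G ⧸ K₀) ⧸ Kb) := Subgroup.finite_quotient_of_finiteIndex (H := Kb)
          refine Finite.of_injective
            (fun x : ↥Mb => ((x : G ⧸ K₀) : (G ⧸ K₀) ⧸ Kb)) ?_
          intro x y hxy
          rw [QuotientGroup.eq] at hxy
          have h5 : (x : G ⧸ K₀)⁻¹ * y ∈ Mb := Mb.mul_mem (Mb.inv_mem x.2) y.2
          have h6 : (x : G ⧸ K₀)⁻¹ * y ∈ Mb ⊓ Kb := ⟨h5, hxy⟩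
          rw [hMbKb, Subgroup.mem_bot] at h6
          have : (x : G ⧸ K₀) = y := by
            have := congrArg (fun z => (x : G ⧸ K₀) * z) h6
            simpa [mul_assoc] using this.symm
          exact Subtype.ext this
        -- Mb ⊔ Kb = ⊤
        have hMbKbtop : Mb ⊔ Kb = ⊤ := by
          rw [hMbdef, hKbdef, ← Subgroup.map_sup, hMK]
          exact Subgroup.map_top_of_surjective π hπsurj
        -- the set of Mb-conjugates of a
        set S : Set (G ⧸ K₀) := (fun q => q * a * q⁻¹) '' (Mb : Set (G ⧸ K₀)) with hSdef
        have hSfin : S.Finite := Set.Finite.image _ (Mb : Set (G ⧸ K₀)).toFinite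
        have hSsub : S ⊆ (Kb : Set (G ⧸ K₀)) := by
          rintro _ ⟨m, hm, rfl⟩
          exact hKbnormal.conj_mem a haK m
        have haS : a ∈ S := ⟨1, Mb.one_mem, by group⟩
        -- conjugation maps S into S
        have hconjS : ∀ g : G ⧸ K₀, (fun x => g * x * g⁻¹) '' S ⊆ S := by
          intro g
          rintro _ ⟨_, ⟨m, hm, rfl⟩, rfl⟩
          have hgtop : g ∈ Mb ⊔ Kb := by rw [hMbKbtop]; exact mem_top g
          rw [← SetLike.mem_coe, Subgroup.mul_normal] at hgtop
          obtain ⟨m', hm', kq, hkq, rfl⟩ := hgtop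
          refine ⟨m' * m, Mb.mul_mem hm' hm, ?_⟩
          have hmam : m * a * m⁻¹ ∈ Kb := hKbnormal.conj_mem a haK m
          have h3 : kq * (m * a * m⁻¹) * kq⁻¹ = m * a * m⁻¹ := by
            rw [hcomm kq hkq _ hmam, mul_assoc, mul_inv_cancel, mul_one]
          calc (m' * m) * a * (m' * m)⁻¹
              = m' * (m * a * m⁻¹) * m'⁻¹ := by group
            _ = m' * (kq * (m * a * m⁻¹) * kq⁻¹) * m'⁻¹ := by rw [h3]
            _ = (m' * kq) * (m * a * m⁻¹) * (m' * kq)⁻¹ := by group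
        -- the subgroup generated by S is normal
        have hTnormal : (Subgroup.closure S).Normal := by
          constructor
          intro n hn g
          have h1 : g * n * g⁻¹ ∈ Subgroup.map (MulAut.conj g).toMonoidHom (Subgroup.closure S) :=
            ⟨n, hn, rfl⟩
          rw [MonoidHom.map_closure] at h1
          refine Subgroup.closure_mono ?_ h1
          intro y hy
          exact hconjS g hy
        have hTKb : Subgroup.closure S = Kb := by
          refine hstar _ hTnormal ((Subgroup.closure_le Kb).mpr hSsub) ?_
          intro h
          apply hane
          have : a ∈ Subgroup.closure S := Subgroup.subset_closure haS
          rw [h, Subgroup.mem_bot] at this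
          exact this
        haveI hKbFG : Group.FG ↥Kb :=
          (Group.fg_iff_subgroup_fg Kb).mpr ((Subgroup.fg_iff Kb).mpr ⟨S, hTKb, hSfin⟩)
        letI : CommGroup ↥Kb :=
          { (inferInstance : Group ↥Kb) with
            mul_comm := fun x y => Subtype.ext (hcomm x x.2 y y.2) }
        haveI : Nontrivial ↥Kb :=
          ⟨⟨a, haK⟩, 1, fun h => hane (congrArg Subtype.val h)⟩
        obtain ⟨L, hL⟩ := aux_exists_coatom_of_fg (A := ↥Kb) hKbFG
        haveI := aux_isSimpleGroup_quotient L hL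
        haveI hQfin : Finite (↥Kb ⧸ L) := aux_finite_of_isSimpleGroup
        set p := Nat.card (↥Kb ⧸ L) with hpdef
        have hp : p.Prime := IsSimpleGroup.prime_card
        have hxpL : ∀ x : ↥Kb, x ^ p ∈ L := by
          intro x
          have h1 : ((x : ↥Kb ⧸ L)) ^ p = 1 := pow_card_eq_one'
          rw [← QuotientGroup.mk_pow] at h1
          exact (QuotientGroup.eq_one_iff _).mp h1
        -- the subgroup of p-th powers of Kb
        set P : Subgroup (G ⧸ K₀) :=
          { carrier := (fun x : G ⧸ K₀ => x ^ p) '' (Kb : Set (G ⧸ K₀))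
            one_mem' := ⟨1, Kb.one_mem, by simp⟩
            mul_mem' := by
              rintro _ _ ⟨x, hx, rfl⟩ ⟨y, hy, rfl⟩
              refine ⟨x * y, Kb.mul_mem hx hy, ?_⟩
              show (x * y) ^ p = x ^ p * y ^ p
              exact Commute.mul_pow (hcomm x hx y hy) p
            inv_mem' := by
              rintro _ ⟨x, hx, rfl⟩
              refine ⟨x⁻¹, Kb.inv_mem hx, ?_⟩
              show x⁻¹ ^ p = (x ^ p)⁻¹
              exact inv_pow x p } with hPdef
        have hPle : P ≤ Kb := by
          rintro _ ⟨x, hx, rfl⟩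
          exact Kb.pow_mem hx p
        haveI hPnormal : P.Normal := by
          constructor
          rintro _ ⟨x, hx, rfl⟩ g
          refine ⟨g * x * g⁻¹, hKbnormal.conj_mem x hx g, ?_⟩
          show (g * x * g⁻¹) ^ p = g * x ^ p * g⁻¹
          rw [conj_pow]
        by_cases hPbot : P = ⊥
        · -- Kb has exponent p
          have hpow : ∀ x : ↥Kb, x ^ p = 1 := by
            intro x
            have h1 : (x : G ⧸ K₀) ^ p ∈ P := ⟨x, x.2, rfl⟩
            rw [hPbot, Subgroup.mem_bot] at h1
            exact Subtype.ext (by rw [SubmonoidClass.coe_pow]; exact h1)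
          exact aux_finite_of_fg_of_exponent hKbFG hp.ne_zero hpow
        · exfalso
          have hPKb : P = Kb := hstar P hPnormal hPle hPbot
          apply hL.1
          rw [eq_top_iff]
          intro z _
          have hz : (z : G ⧸ K₀) ∈ P := by rw [hPKb]; exact z.2
          obtain ⟨y, hy, hye⟩ := hz
          have h7 : (⟨y, hy⟩ : ↥Kb) ^ p ∈ L := hxpL _
          have h8 : ((⟨y, hy⟩ : ↥Kb) ^ p : ↥Kb) = z := by
            apply Subtype.ext
            rw [SubmonoidClass.coe_pow]
            exact hye
          rwa [h8] at h7
    -- conclude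
    haveI : Finite ((G ⧸ K₀) ⧸ Kb) := Subgroup.finite_quotient_of_finiteIndex (H := Kb)
    haveI hGfin : Finite (G ⧸ K₀) :=
      Finite.of_equiv _ (Subgroup.groupEquivQuotientProdSubgroup (s := Kb)).symm
    refine ⟨?_⟩
    rw [← hMb_index]
    exact Subgroup.index_ne_zero_of_finite
end

section
/- Let p be a prime, let i, i₁, i₂ be elements of F_p with i ≠ 0 and i₁ ≠ i₂, and let k be an integer with 1 < k < p - 1. For v ∈ F_p set I_v = {v - d·i : d an integer with 0 ≤ d ≤ k - 1} ⊆ F_p. If there exist v₁, v₂ ∈ F_p such that for every v ∈ F_p one has |I_v ∩ {i₁, i₂}| = 1 if and only if v ∈ {v₁, v₂}, then i₂ = i₁ + i or i₂ = i₁ - i. -/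
lemma card_inter_pair_eq_one {α : Type*} [DecidableEq α] (s : Finset α) {a b : α}
    (hab : a ≠ b) : (s ∩ {a, b}).card = 1 ↔ Xor' (a ∈ s) (b ∈ s) := by
  have h : s ∩ {a, b} = ({a, b} : Finset α).filter (· ∈ s) := by
    rw [Finset.filter_mem_eq_inter, Finset.inter_comm]
  rw [h]
  by_cases ha : a ∈ s <;> by_cases hb : b ∈ s <;>
    simp [Finset.filter_insert, Finset.filter_singleton, ha, hb, Xor', hab,
      Finset.card_pair hab]

lemma three_vals (p k m : ℕ) (hk1 : 2 ≤ k) (hk2 : k ≤ p - 2)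
    (hm1 : 2 ≤ m) (hm2 : m ≤ p - 2) (hp : 4 ≤ p) :
    ∃ a b c : ℕ, a < p ∧ b < p ∧ c < p ∧ a ≠ b ∧ a ≠ c ∧ b ≠ c ∧
      Xor' (a < k) ((a + p - m) % p < k) ∧ Xor' (b < k) ((b + p - m) % p < k) ∧
      Xor' (c < k) ((c + p - m) % p < k) := by
  rcases le_or_gt k m with h1 | h1 <;> rcases le_or_gt (m + k) p with h2 | h2
  · -- k ≤ m, m + k ≤ p : use 0, 1, m
    refine ⟨0, 1, m, by omega, by omega, by omega, by omega, by omega, by omega, ?_, ?_, ?_⟩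
    · rw [show (0 + p - m) % p = 0 + p - m from Nat.mod_eq_of_lt (by omega)]
      simp only [Xor', Xor]; omega
    · rw [show (1 + p - m) % p = 1 + p - m from Nat.mod_eq_of_lt (by omega)]
      simp only [Xor', Xor]; omega
    · rw [show (m + p - m) % p = 0 from by rw [show m + p - m = p by omega, Nat.mod_self]]
      simp only [Xor', Xor]; omega
  · -- k ≤ m, p < m + k : use k-2, k-1, m
    refine ⟨k - 2, k - 1, m, by omega, by omega, by omega, by omega, by omega, by omega,
      ?_, ?_, ?_⟩
    · rw [show (k - 2 + p - m) % p = k - 2 + p - m from Nat.mod_eq_of_lt (by omega)]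
      simp only [Xor', Xor]; omega
    · rw [show (k - 1 + p - m) % p = k - 1 + p - m from Nat.mod_eq_of_lt (by omega)]
      simp only [Xor', Xor]; omega
    · rw [show (m + p - m) % p = 0 from by rw [show m + p - m = p by omega, Nat.mod_self]]
      simp only [Xor', Xor]; omega
  · -- m < k, m + k ≤ p : use 0, 1, k
    refine ⟨0, 1, k, by omega, by omega, by omega, by omega, by omega, by omega, ?_, ?_, ?_⟩
    · rw [show (0 + p - m) % p = 0 + p - m from Nat.mod_eq_of_lt (by omega)]
      simp only [Xor', Xor]; omega
    · rw [show (1 + p - m) % p = 1 + p - m from Nat.mod_eq_of_lt (by omega)]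
      simp only [Xor', Xor]; omega
    · rw [show (k + p - m) % p = k - m from by
        rw [show k + p - m = (k - m) + p by omega, Nat.add_mod_right]
        exact Nat.mod_eq_of_lt (by omega)]
      simp only [Xor', Xor]; omega
  · -- m < k, p < m + k : use m-2, m-1, k
    refine ⟨m - 2, m - 1, k, by omega, by omega, by omega, by omega, by omega, by omega,
      ?_, ?_, ?_⟩
    · rw [show (m - 2 + p - m) % p = p - 2 from by
        rw [show m - 2 + p - m = p - 2 by omega]; exact Nat.mod_eq_of_lt (by omega)]
      simp only [Xor', Xor]; omega
    · rw [show (m - 1 + p - m) % p = p - 1 from by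
        rw [show m - 1 + p - m = p - 1 by omega]; exact Nat.mod_eq_of_lt (by omega)]
      simp only [Xor', Xor]; omega
    · rw [show (k + p - m) % p = k - m from by
        rw [show k + p - m = (k - m) + p by omega, Nat.add_mod_right]
        exact Nat.mod_eq_of_lt (by omega)]
      simp only [Xor', Xor]; omega

/-- **Lemma 5.5.** Let `i, k, i₁, i₂ ∈ F_p` with `i ≠ 0`, `i₁ ≠ i₂` and `1 < k < p-1`,
and for `v ∈ F_p` let `I_v = {v - d·i ∣ 0 ≤ d ≤ k-1}`. If there are `v₁, v₂ ∈ F_p`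
such that `|I_v ∩ {i₁, i₂}| = 1` exactly when `v ∈ {v₁, v₂}`, then `i₂ = i₁ + i` or
`i₂ = i₁ - i`. -/
theorem interval_intersection_lemma
    (p : ℕ) (hp : p.Prime) (i i₁ i₂ : ZMod p) (hi : i ≠ 0) (h12 : i₁ ≠ i₂)
    (k : ℕ) (hk1 : 1 < k) (hk2 : k < p - 1) (v₁ v₂ : ZMod p)
    (hcond : ∀ v : ZMod p,
      (((Finset.range k).image fun d : ℕ => v - (d : ZMod p) * i) ∩ {i₁, i₂}).card = 1
        ↔ v = v₁ ∨ v = v₂) :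
    i₂ = i₁ + i ∨ i₂ = i₁ - i := by
  haveI : Fact p.Prime := ⟨hp⟩
  have hp4 : 4 ≤ p := by omega
  have hkp : k < p := by omega
  -- membership characterization
  have hmem : ∀ v j : ZMod p,
      (j ∈ (Finset.range k).image fun d : ℕ => v - (d : ZMod p) * i) ↔
      ((v - j) * i⁻¹).val < k := by
    intro v j
    simp only [Finset.mem_image, Finset.mem_range]
    constructor
    · rintro ⟨d, hd, rfl⟩
      have h : (v - (v - (d : ZMod p) * i)) * i⁻¹ = (d : ZMod p) := by
        field_simp
        ring
      rw [h, ZMod.val_natCast_of_lt (lt_trans hd hkp)]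
      exact hd
    · intro h
      refine ⟨((v - j) * i⁻¹).val, h, ?_⟩
      have h2 : ((((v - j) * i⁻¹).val : ℕ) : ZMod p) = (v - j) * i⁻¹ :=
        ZMod.natCast_rightInverse _
      rw [h2]
      field_simp
      ring
  set t : ZMod p := (i₂ - i₁) * i⁻¹ with ht
  have ht0 : t ≠ 0 := by
    apply mul_ne_zero (sub_ne_zero.2 (Ne.symm h12)) (inv_ne_zero hi)
  set m := t.val with hm
  have htm : ((m : ℕ) : ZMod p) = t := ZMod.natCast_rightInverse t
  have hm1 : 1 ≤ m := by
    rcases Nat.eq_zero_or_pos m with h | h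
    · exfalso; apply ht0; rw [← htm, h]; simp
    · exact h
  have hmp : m < p := ZMod.val_lt t
  -- reduce goal to m = 1 ∨ m = p - 1
  have goal_of : m = 1 ∨ m = p - 1 → i₂ = i₁ + i ∨ i₂ = i₁ - i := by
    rintro (h | h)
    · left
      have : t = 1 := by rw [← htm, h]; simp
      have h2 : (i₂ - i₁) * i⁻¹ * i = 1 * i := by rw [← ht, this]
      field_simp at h2
      linear_combination h2
    · right
      have : t = -1 := by
        rw [← htm, h]
        have : ((p : ℕ) : ZMod p) = 0 := ZMod.natCast_self p
        push_cast [Nat.cast_sub (by omega : 1 ≤ p)]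
        rw [this]; ring
      have h2 : (i₂ - i₁) * i⁻¹ * i = (-1) * i := by rw [← ht, this]
      field_simp at h2
      linear_combination h2
  apply goal_of
  by_contra hcon
  push_neg at hcon
  have hm2 : 2 ≤ m := by omega
  have hm3 : m ≤ p - 2 := by omega
  obtain ⟨a, b, c, hap, hbp, hcp, hab, hac, hbc, Qa, Qb, Qc⟩ :=
    three_vals p k m (by omega) (by omega) hm2 hm3 hp4
  -- for a natural a < p, the point v = i₁ + a * i satisfies the Xor condition
  have key : ∀ a : ℕ, a < p → Xor' (a < k) ((a + p - m) % p < k) →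
      (i₁ + (a : ZMod p) * i = v₁ ∨ i₁ + (a : ZMod p) * i = v₂) := by
    intro a ha hQ
    set v : ZMod p := i₁ + (a : ZMod p) * i with hv
    have e1 : (v - i₁) * i⁻¹ = (a : ZMod p) := by rw [hv]; field_simp; ring
    have hii : i * i⁻¹ = 1 := mul_inv_cancel₀ hi
    have e2 : (v - i₂) * i⁻¹ = (a : ZMod p) - t := by
      rw [hv, ht]; linear_combination (a : ZMod p) * hii
    have e3 : ((a : ZMod p) - t) = (((a + p - m : ℕ)) : ZMod p) := by
      rw [← htm]
      push_cast [Nat.cast_sub (by omega : m ≤ a + p)]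
      rw [ZMod.natCast_self]
      ring
    rw [← hcond]
    rw [card_inter_pair_eq_one _ h12, hmem, hmem, e1, e2, e3,
      ZMod.val_natCast_of_lt ha, ZMod.val_natCast]
    exact hQ
  have da : ∀ x y : ℕ, x < p → y < p → x ≠ y →
      i₁ + (x : ZMod p) * i ≠ i₁ + (y : ZMod p) * i := by
    intro x y hx hy hxy h
    have : (x : ZMod p) * i = (y : ZMod p) * i := by linear_combination h
    have h2 : (x : ZMod p) = (y : ZMod p) := mul_right_cancel₀ hi this
    have := congrArg ZMod.val h2
    rw [ZMod.val_natCast_of_lt hx, ZMod.val_natCast_of_lt hy] at this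
    exact hxy this
  have Ka := key a hap Qa
  have Kb := key b hbp Qb
  have Kc := key c hcp Qc
  have Dab := da a b hap hbp hab
  have Dac := da a c hap hcp hac
  have Dbc := da b c hbp hcp hbc
  rcases Ka with h | h <;> rcases Kb with h' | h' <;> rcases Kc with h'' | h'' <;>
    simp_all
end

section
/- Let p be an odd prime and let A be the (p-1)×(p-1) integer matrix with entry A(i,j) = -1 whenever j = p-1, A(i,j) = 1 whenever j ≤ p-2 and i = j+1, and A(i,j) = 0 otherwise. Then A^p is the identity matrix, so A induces an action of the cyclic group ℤ/pℤ on ℤ^{p-1} by automorphisms, and the resulting semidirect product (ℤ/pℤ) ⋉ ℤ^{p-1} has infinitely many distinct maximal subgroups. -/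
/-- The companion matrix of `1 + x + ⋯ + x^{p-1}`: the last column is constantly `-1`,
the subdiagonal entries are `1`, and all other entries are `0`. (Indices are
`0`-based: column `p-2` is the last column.) -/
def Amat (p : ℕ) : Matrix (Fin (p - 1)) (Fin (p - 1)) ℤ :=
  Matrix.of fun i j =>
    if (j : ℕ) = p - 2 then -1 else if (i : ℕ) = (j : ℕ) + 1 then 1 else 0


open Polynomial AdjoinRoot in
lemma Amat_pow_eq_one (p : ℕ) (hp2 : 2 ≤ p) : Amat p ^ p = 1 := by
  set f : ℤ[X] := ∑ i ∈ Finset.range p, X ^ i with hf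
  have hp0 : p ≠ 0 := by omega
  have hmonic : f.Monic := Polynomial.monic_geom_sum_X hp0
  have hdeg : f.natDegree = p - 1 := by
    have hle : f.natDegree ≤ p - 1 := by
      apply Polynomial.natDegree_sum_le_of_forall_le
      intro i hi
      simpa using Nat.lt_succ_iff.mp (by simpa [Nat.succ_eq_add_one, Nat.sub_add_cancel (by omega : 1 ≤ p)]
        using (Finset.mem_range.mp hi))
    have hco : f.coeff (p - 1) = 1 := by
      rw [hf, Polynomial.finset_sum_coeff]
      simp only [Polynomial.coeff_X_pow]
      rw [Finset.sum_ite_eq (Finset.range p) (p-1) (fun _ => (1:ℤ))]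
      simp [Finset.mem_range]; omega
    have : f.natDegree ≥ p - 1 := Polynomial.le_natDegree_of_ne_zero (by rw [hco]; norm_num)
    omega
  set pb := AdjoinRoot.powerBasis' hmonic with hpb
  have hdim : pb.dim = p - 1 := by rw [hpb, AdjoinRoot.powerBasis'_dim, hdeg]
  have hgen : pb.gen = root f := rfl
  have hsum : ∑ i ∈ Finset.range p, (root f) ^ i = 0 := by
    have h1 : (mk f) f = 0 := AdjoinRoot.mk_self
    rw [hf] at h1
    rw [map_sum] at h1
    simpa [map_pow, AdjoinRoot.mk_X] using h1
  have hrootpow : (root f) ^ p = 1 := by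
    have h := geom_sum_mul (root f) p
    rw [hsum, zero_mul] at h
    have := sub_eq_zero.mp h.symm
    exact this
  -- the algebra hom
  let e : Fin pb.dim ≃ Fin (p - 1) := finCongr hdim
  let Φ : AdjoinRoot f →ₐ[ℤ] Matrix (Fin (p-1)) (Fin (p-1)) ℤ :=
    ((Matrix.reindexAlgEquiv ℤ ℤ e).toAlgHom.comp
      ((LinearMap.toMatrixAlgEquiv pb.basis).toAlgHom.comp (Algebra.lmul ℤ (AdjoinRoot f))))
  have hA : Φ (root f) = Amat p := by
    ext i j
    show (Matrix.reindexAlgEquiv ℤ ℤ e)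
      ((LinearMap.toMatrixAlgEquiv pb.basis) (Algebra.lmul ℤ (AdjoinRoot f) (root f))) i j = _
    rw [Matrix.reindexAlgEquiv_apply, Matrix.reindex_apply, Matrix.submatrix_apply,
      LinearMap.toMatrixAlgEquiv_apply]
    have hbj : pb.basis (e.symm j) = root f ^ ((j:ℕ)) := by
      rw [pb.basis_eq_pow, hgen]; congr 1
    rw [hbj]
    have hAmul : (Algebra.lmul ℤ (AdjoinRoot f)) (root f) (root f ^ (j:ℕ)) = root f ^ ((j:ℕ)+1) := by
      show root f * root f ^ (j:ℕ) = root f ^ ((j:ℕ)+1)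
      rw [pow_succ, mul_comm]
    rw [hAmul]
    by_cases hj : (j:ℕ) = p - 2
    · -- root ^ (p-1)
      have hj1 : (j:ℕ) + 1 = p - 1 := by omega
      rw [hj1]
      have hsplit : root f ^ (p - 1) = - ∑ k : Fin pb.dim, pb.basis k := by
        have h2 : ∑ i ∈ Finset.range (p-1), (root f)^i + (root f)^(p-1) = 0 := by
          rw [← Finset.sum_range_succ]
          have : p - 1 + 1 = p := by omega
          rw [this, hsum]
        have h3 : ∑ k : Fin pb.dim, pb.basis k = ∑ i ∈ Finset.range (p-1), (root f)^i := by
          rw [← hdim]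
          rw [← Fin.sum_univ_eq_sum_range (fun i => (root f)^i) pb.dim]
          exact Finset.sum_congr rfl fun k _ => by rw [pb.basis_eq_pow, hgen]
        rw [h3]; linear_combination h2
      rw [hsplit, map_neg, map_sum]
      simp only [Module.Basis.repr_self]
      rw [Finsupp.coe_neg, Pi.neg_apply, Finsupp.finset_sum_apply]
      simp only [Finsupp.single_apply]
      rw [Finset.sum_ite_eq' Finset.univ (e.symm i) (fun _ => (1:ℤ))]
      simp [Amat, hj]
    · have hjlt : (j:ℕ) + 1 < p - 1 := by have := j.isLt; omega
      have : root f ^ ((j:ℕ)+1) = pb.basis ⟨(j:ℕ)+1, by omega⟩ := by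
        rw [pb.basis_eq_pow, hgen]
      rw [this, Module.Basis.repr_self, Finsupp.single_apply]
      have : (⟨(j:ℕ)+1, by omega⟩ : Fin pb.dim) = e.symm i ↔ (i:ℕ) = (j:ℕ)+1 := by
        rw [Fin.ext_iff]; simp [e, eq_comm]
      simp only [Amat, Matrix.of_apply, hj, if_false]
      split_ifs with h1 h2 h2 <;> first | rfl | (exfalso; omega) | (exfalso; exact h2 (this.mp h1)) | (exfalso; exact h1 (this.mpr h2))
  calc Amat p ^ p = Φ (root f ^ p) := by rw [map_pow, hA]
  _ = 1 := by rw [hrootpow, map_one]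


/-- the character `v ↦ ∑ ζ^i v i`. -/
def chiF (p q : ℕ) (ζ : ZMod q) (v : Fin (p - 1) → ℤ) : ZMod q :=
  ∑ i : Fin (p - 1), ζ ^ (i : ℕ) * ((v i : ℤ) : ZMod q)

lemma chiF_add (p q : ℕ) (ζ : ZMod q) (v w : Fin (p - 1) → ℤ) :
    chiF p q ζ (v + w) = chiF p q ζ v + chiF p q ζ w := by
  simp [chiF, mul_add, Finset.sum_add_distrib]

lemma chiF_neg (p q : ℕ) (ζ : ZMod q) (v : Fin (p - 1) → ℤ) :
    chiF p q ζ (-v) = - chiF p q ζ v := by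
  simp [chiF, Finset.sum_neg_distrib]

lemma chiF_zero (p q : ℕ) (ζ : ZMod q) : chiF p q ζ 0 = 0 := by simp [chiF]

lemma chiF_mulVec (p q : ℕ) (hp2 : 2 ≤ p) (ζ : ZMod q)
    (hζ : ∑ i ∈ Finset.range p, ζ ^ i = 0) (v : Fin (p - 1) → ℤ) :
    chiF p q ζ ((Amat p).mulVec v) = ζ * chiF p q ζ v := by
  have key : ∀ j : Fin (p-1), (∑ i : Fin (p-1), ζ ^ (i:ℕ) * ((Amat p) i j : ZMod q))
      = ζ ^ ((j:ℕ)+1) := by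
    intro j
    by_cases hj : (j:ℕ) = p - 2
    · have h1 : ∀ i : Fin (p-1), ((Amat p) i j : ℤ) = -1 := fun i => by simp [Amat, hj]
      have h2 : ∑ i : Fin (p-1), ζ ^ (i:ℕ) * (((Amat p) i j : ℤ) : ZMod q)
          = - ∑ i ∈ Finset.range (p-1), ζ ^ i := by
        rw [← Fin.sum_univ_eq_sum_range (fun i => ζ ^ i) (p-1), ← Finset.sum_neg_distrib]
        exact Finset.sum_congr rfl fun i _ => by rw [h1 i]; push_cast; ring
      rw [h2]
      have h3 : ∑ i ∈ Finset.range (p-1), ζ^i + ζ^(p-1) = 0 := by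
        rw [← Finset.sum_range_succ]
        have : p - 1 + 1 = p := by omega
        rw [this, hζ]
      have : (j:ℕ) + 1 = p - 1 := by omega
      rw [this]; linear_combination -h3
    · have hjlt : (j:ℕ) + 1 < p - 1 := by have := j.isLt; omega
      have h1 : ∀ i : Fin (p-1), ζ ^ (i:ℕ) * (((Amat p) i j : ℤ) : ZMod q)
          = if i = (⟨(j:ℕ)+1, hjlt⟩ : Fin (p-1)) then ζ ^ ((j:ℕ)+1) else 0 := by
        intro i
        simp only [Amat, Matrix.of_apply, hj, if_false, Fin.ext_iff]
        split_ifs with h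
        · rw [h]; push_cast; ring
        · push_cast; ring
      rw [Finset.sum_congr rfl fun i _ => h1 i, Finset.sum_ite_eq' Finset.univ _ (fun _ => ζ ^ ((j:ℕ)+1))]
      simp
  calc chiF p q ζ ((Amat p).mulVec v)
      = ∑ i : Fin (p-1), ∑ j : Fin (p-1), ζ ^ (i:ℕ) * ((Amat p) i j : ZMod q) * (v j : ZMod q) := by
        unfold chiF Matrix.mulVec dotProduct
        exact Finset.sum_congr rfl fun i _ => by push_cast [Finset.mul_sum]; ring_nf
    _ = ∑ j : Fin (p-1), (∑ i : Fin (p-1), ζ ^ (i:ℕ) * ((Amat p) i j : ZMod q)) * (v j : ZMod q) := by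
        rw [Finset.sum_comm]
        exact Finset.sum_congr rfl fun j _ => by rw [Finset.sum_mul]
    _ = ∑ j : Fin (p-1), ζ ^ ((j:ℕ)+1) * (v j : ZMod q) := by
        exact Finset.sum_congr rfl fun j _ => by rw [key j]
    _ = ζ * chiF p q ζ v := by
        unfold chiF; rw [Finset.mul_sum]
        exact Finset.sum_congr rfl fun j _ => by rw [pow_succ]; ring

lemma exists_zeta (p q : ℕ) (hq : q.Prime) (hp1 : 1 < p) (hdvd : p ∣ q - 1) :
    ∃ ζ : ZMod q, ζ ^ p = 1 ∧ ζ ≠ 1 := by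
  haveI := Fact.mk hq
  obtain ⟨g, hg⟩ := IsCyclic.exists_generator (α := (ZMod q)ˣ)
  have hcard : Fintype.card (ZMod q)ˣ = q - 1 := by
    rw [ZMod.card_units_eq_totient, Nat.totient_prime hq]
  have horder : orderOf g = q - 1 := by
    rw [orderOf_eq_card_of_forall_mem_zpowers hg, Nat.card_eq_fintype_card, hcard]
  have hq1pos : 0 < q - 1 := by have := hq.two_le; omega
  have hppos : 0 < p := by omega
  set u := g ^ ((q-1)/p) with hu
  have hup : u ^ p = 1 := by
    rw [hu, ← pow_mul, Nat.div_mul_cancel hdvd, ← horder, pow_orderOf_eq_one]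
  have hune : u ≠ 1 := by
    intro h
    have hd : orderOf g ∣ (q-1)/p := orderOf_dvd_of_pow_eq_one h
    rw [horder] at hd
    have hpos : 0 < (q-1)/p := Nat.div_pos (Nat.le_of_dvd hq1pos hdvd) hppos
    have hlt : (q-1)/p < q-1 := Nat.div_lt_self hq1pos hp1
    have := Nat.le_of_dvd hpos hd
    omega
  refine ⟨(u : ZMod q), ?_, ?_⟩
  · rw [← Units.val_pow_eq_pow_val, hup, Units.val_one]
  · intro h
    exact hune (Units.ext (by rw [h, Units.val_one]))

lemma zeta_geom_sum (p q : ℕ) (hq : q.Prime) (ζ : ZMod q) (hp : ζ ^ p = 1) (hne : ζ ≠ 1) :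
    ∑ i ∈ Finset.range p, ζ ^ i = 0 := by
  haveI := Fact.mk hq
  have h := geom_sum_mul ζ p
  rw [hp, sub_self] at h
  rcases mul_eq_zero.mp h with h1 | h1
  · exact h1
  · exact absurd (sub_eq_zero.mp h1) hne


lemma chiF_single (p q : ℕ) (hp2 : 2 ≤ p) (hq : 0 < q) (ζ : ZMod q) (c : ZMod q) :
    chiF p q ζ (Pi.single (⟨0, by omega⟩ : Fin (p-1)) ((c.val : ℤ))) = c := by
  unfold chiF
  rw [Finset.sum_eq_single (⟨0, by omega⟩ : Fin (p-1))]
  · rw [Pi.single_eq_same]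
    haveI : NeZero q := ⟨hq.ne'⟩
    have h1 : ((c.val : ℤ) : ZMod q) = c := by
      rw [Int.cast_natCast]; exact ZMod.natCast_rightInverse c
    simp [h1]
  · intro i _ hne
    rw [Pi.single_eq_of_ne hne]
    simp
  · intro h; exact absurd (Finset.mem_univ _) h

/-- For `p` an odd prime, `A^p = 1`, so `A` induces an action of `ℤ/pℤ` on `ℤ^{p-1}`
by automorphisms, and the resulting semidirect product `(ℤ/pℤ) ⋉ ℤ^{p-1}` has
infinitely many distinct maximal subgroups. -/
theorem semidirect_product_infinitely_many_maximal_subgroups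
    (p : ℕ) (hp : p.Prime) (hodd : Odd p) :
    Amat p ^ p = 1 ∧
    ∀ (φ : Multiplicative (ZMod p) →* MulAut (Multiplicative (Fin (p - 1) → ℤ))),
      (∀ v : Fin (p - 1) → ℤ,
        φ (Multiplicative.ofAdd (1 : ZMod p)) (Multiplicative.ofAdd v)
          = Multiplicative.ofAdd ((Amat p).mulVec v)) →
      {M : Subgroup (SemidirectProduct (Multiplicative (Fin (p - 1) → ℤ))
          (Multiplicative (ZMod p)) φ) | IsCoatom M}.Infinite := by
  classical
  have hp3 : 3 ≤ p := by
    rcases hodd with ⟨k, hk⟩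
    have := hp.two_le
    omega
  haveI : NeZero p := ⟨by omega⟩
  refine ⟨Amat_pow_eq_one p (by omega), ?_⟩
  intro φ hφ
  set G := SemidirectProduct (Multiplicative (Fin (p - 1) → ℤ)) (Multiplicative (ZMod p)) φ
    with hG
  have key : ∀ q : ℕ, q.Prime → q ≡ 1 [MOD p] →
      ∃ M : Subgroup G, IsCoatom M ∧ M.index = q := by
    intro q hq hmod
    haveI := Fact.mk hq
    have hdvd : p ∣ q - 1 := (Nat.modEq_iff_dvd' hq.one_le).mp hmod.symm
    obtain ⟨ζ, hζp, hζ1⟩ := exists_zeta p q hq (by omega) hdvd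
    have hgeom := zeta_geom_sum p q hq ζ hζp hζ1
    have hζ0 : ζ ≠ 0 := by
      intro h
      rw [h, zero_pow (by omega : p ≠ 0)] at hζp
      exact zero_ne_one hζp
    have hζm0 : ∀ m : ℕ, ζ ^ m ≠ 0 := fun m => pow_ne_zero m hζ0
    -- action of the generator
    have hstep : ∀ x : Multiplicative (Fin (p-1) → ℤ),
        chiF p q ζ (Multiplicative.toAdd (φ (Multiplicative.ofAdd (1:ZMod p)) x))
          = ζ * chiF p q ζ (Multiplicative.toAdd x) := by
      intro x
      have h := hφ (Multiplicative.toAdd x)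
      rw [ofAdd_toAdd] at h
      rw [h, toAdd_ofAdd]
      exact chiF_mulVec p q (by omega) ζ hgeom _
    have hpow : ∀ (n : ℕ) (x : Multiplicative (Fin (p-1) → ℤ)),
        chiF p q ζ (Multiplicative.toAdd (((φ (Multiplicative.ofAdd (1:ZMod p))) ^ n) x))
          = ζ^n * chiF p q ζ (Multiplicative.toAdd x) := by
      intro n
      induction n with
      | zero => intro x; simp
      | succ n ih =>
        intro x
        rw [pow_succ]
        rw [MulAut.mul_apply]
        rw [ih, hstep, pow_succ]
        ring
    have hact : ∀ (k : Multiplicative (ZMod p)) (x : Multiplicative (Fin (p-1) → ℤ)),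
        chiF p q ζ (Multiplicative.toAdd (φ k x))
          = ζ^((Multiplicative.toAdd k).val) * chiF p q ζ (Multiplicative.toAdd x) := by
      intro k x
      have hk : k = (Multiplicative.ofAdd (1:ZMod p))^((Multiplicative.toAdd k).val) := by
        rw [← ofAdd_nsmul, nsmul_eq_mul, mul_one,
          ZMod.natCast_rightInverse (Multiplicative.toAdd k), ofAdd_toAdd]
      conv_lhs => rw [hk]
      rw [map_pow]
      exact hpow _ x
    -- the subgroup
    let M : Subgroup G :=
      { carrier := {g : G | chiF p q ζ (Multiplicative.toAdd g.left) = 0}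
        one_mem' := by
          show chiF p q ζ (Multiplicative.toAdd (1 : G).left) = 0
          rw [SemidirectProduct.one_left, toAdd_one]
          exact chiF_zero p q ζ
        mul_mem' := by
          intro a b ha hb
          have ha' : chiF p q ζ (Multiplicative.toAdd a.left) = 0 := ha
          have hb' : chiF p q ζ (Multiplicative.toAdd b.left) = 0 := hb
          show chiF p q ζ (Multiplicative.toAdd (a*b).left) = 0
          rw [SemidirectProduct.mul_left, toAdd_mul, chiF_add, ha', hact, hb',
            mul_zero, zero_add]
        inv_mem' := by
          intro a ha
          have ha' : chiF p q ζ (Multiplicative.toAdd a.left) = 0 := ha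
          show chiF p q ζ (Multiplicative.toAdd a⁻¹.left) = 0
          rw [SemidirectProduct.inv_left, hact]
          simp only [toAdd_inv]
          rw [chiF_neg, ha', neg_zero, mul_zero] }
    have hmem : ∀ g : G, g ∈ M ↔ chiF p q ζ (Multiplicative.toAdd g.left) = 0 := fun g => Iff.rfl
    have hcrit : ∀ a b : G, a⁻¹ * b ∈ M ↔
        chiF p q ζ (Multiplicative.toAdd a.left) = chiF p q ζ (Multiplicative.toAdd b.left) := by
      intro a b
      rw [hmem, SemidirectProduct.mul_left, SemidirectProduct.inv_left,
        SemidirectProduct.inv_right, ← map_mul, hact, toAdd_mul]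
      simp only [toAdd_inv]
      rw [chiF_add, chiF_neg]
      constructor
      · intro h
        rcases mul_eq_zero.mp h with h1 | h1
        · exact absurd h1 (hζm0 _)
        · linear_combination -h1
      · intro h
        rw [h]
        ring
    let F : (G ⧸ M) → ZMod q := Quotient.lift (fun g : G => chiF p q ζ (Multiplicative.toAdd g.left))
      (fun a b h => ((hcrit a b).mp (QuotientGroup.leftRel_apply.mp h)))
    have hFsurj : Function.Surjective F := by
      intro c
      refine ⟨QuotientGroup.mk
        (⟨Multiplicative.ofAdd (Pi.single (⟨0, by omega⟩ : Fin (p-1)) ((c.val : ℤ))), 1⟩ : G), ?_⟩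
      show chiF p q ζ (Multiplicative.toAdd (Multiplicative.ofAdd
        (Pi.single (⟨0, by omega⟩ : Fin (p-1)) ((c.val : ℤ))))) = c
      rw [toAdd_ofAdd]
      exact chiF_single p q (by omega) hq.pos ζ c
    have hFinj : Function.Injective F := by
      intro x y
      refine Quotient.inductionOn₂ x y ?_
      intro a b h
      exact Quotient.sound (QuotientGroup.leftRel_apply.mpr ((hcrit a b).mpr h))
    have hindex : M.index = q := by
      rw [Subgroup.index_eq_card, Nat.card_congr (Equiv.ofBijective F ⟨hFinj, hFsurj⟩),
        Nat.card_zmod]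
    refine ⟨M, ⟨?_, ?_⟩, hindex⟩
    · intro h
      rw [h, Subgroup.index_top] at hindex
      exact hq.one_lt.ne hindex
    · intro H hMH
      have hle : M ≤ H := le_of_lt hMH
      have hrel := Subgroup.relIndex_mul_index hle
      rw [hindex] at hrel
      have hdvd' : H.index ∣ q := Dvd.intro_left _ hrel
      rcases hq.eq_one_or_self_of_dvd _ hdvd' with h1 | h1
      · exact Subgroup.index_eq_one.mp h1
      · exfalso
        rw [h1] at hrel
        have hone : M.relIndex H = 1 :=
          Nat.eq_of_mul_eq_mul_right hq.pos (hrel.trans (one_mul q).symm)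
        exact (lt_iff_le_not_ge.mp hMH).2 (Subgroup.relIndex_eq_one.mp hone)
  -- assemble infinitude
  have hSinf := Nat.infinite_setOf_prime_modEq_one (k := p) (by omega)
  let f : ℕ → Subgroup G := fun q =>
    if h : q.Prime ∧ q ≡ 1 [MOD p] then (key q h.1 h.2).choose else ⊤
  have hf : ∀ q ∈ {q : ℕ | q.Prime ∧ q ≡ 1 [MOD p]}, IsCoatom (f q) ∧ (f q).index = q := by
    intro q hq'
    have : f q = (key q hq'.1 hq'.2).choose := dif_pos hq'
    rw [this]
    exact (key q hq'.1 hq'.2).choose_spec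
  have hinj : Set.InjOn f {q : ℕ | q.Prime ∧ q ≡ 1 [MOD p]} := by
    intro a ha b hb hab
    have h1 := (hf a ha).2
    have h2 := (hf b hb).2
    rw [← h1, ← h2, hab]
  exact (hSinf.image hinj).mono (by rintro _ ⟨q, hq', rfl⟩; exact (hf q hq').1)
end
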